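/- Let R be a commutative local ring with 2 invertible and V ∈ OUm_{2n,2m}(R) with m ≥ n+2, n ≥ 2. Let δ ∈ SO_{2n}(R) be orthogonal homotopic to the identity and let δ(T) ∈ SO_{2n}(R[T]) be a homotopy of δ. Then there exists σ(T) ∈ SO_{2m}(R[T]) with σ(0) = I_{2m} and σ(T)^{-1}(δ(T) ⊥ I_{2m-2n}) ∈ EO_{2m}(R[T]) such that δ(T)V = Vσ(T). -/

import Mathlib

open Matrix Polynomial

def sigmaPerm (m : ℕ) (i : Fin (2 * m)) : Fin (2 * m) :=
  if h : i.val % 2 = 0 then ⟨i.val + 1, by have := i.isLt; omega⟩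
  else ⟨i.val - 1, by have := i.isLt; omega⟩

def phiMat (R : Type*) [CommRing R] (m : ℕ) : Matrix (Fin (2 * m)) (Fin (2 * m)) R :=
  Matrix.of fun i j =>
    if i.val % 2 = 0 ∧ j.val = i.val + 1 then 1
    else if j.val % 2 = 0 ∧ i.val = j.val + 1 then 1
    else 0


def IsOrthogonalMat {R : Type*} [CommRing R] {m : ℕ}
    (A : Matrix (Fin (2 * m)) (Fin (2 * m)) R) : Prop :=
  Aᵀ * phiMat R m * A = phiMat R m

def orthE {R : Type*} [CommRing R] (m : ℕ) (i j : Fin (2 * m)) (z : R) :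
    Matrix (Fin (2 * m)) (Fin (2 * m)) R :=
  1 + Matrix.single i j z - Matrix.single (sigmaPerm m j) (sigmaPerm m i) z

def EOGroup (R : Type*) [CommRing R] (m : ℕ) :
    Submonoid (Matrix (Fin (2 * m)) (Fin (2 * m)) R) :=
  Submonoid.closure
    {A | ∃ (i j : Fin (2 * m)) (z : R), i ≠ j ∧ i ≠ sigmaPerm m j ∧ A = orthE m i j z}

def matPerpId {R : Type*} [Zero R] [One R] {n : ℕ} (m : ℕ)
    (A : Matrix (Fin n) (Fin n) R) : Matrix (Fin m) (Fin m) R :=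
  Matrix.of fun i j =>
    if hi : i.val < n then
      (if hj : j.val < n then A ⟨i.val, hi⟩ ⟨j.val, hj⟩ else 0)
    else (if i = j then 1 else 0)

section Basic
variable {R : Type*} [CommRing R] {m : ℕ}

lemma sigmaPerm_val (i : Fin (2*m)) :
    (sigmaPerm m i).val = if i.val % 2 = 0 then i.val + 1 else i.val - 1 := by
  unfold sigmaPerm; split <;> simp

lemma sigmaPerm_sigmaPerm (i : Fin (2*m)) : sigmaPerm m (sigmaPerm m i) = i := by
  apply Fin.ext
  have h := i.isLt
  rw [sigmaPerm_val, sigmaPerm_val]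
  rcases Nat.even_or_odd i.val with he | ho
  · have h0 : i.val % 2 = 0 := Nat.even_iff.mp he
    simp only [h0, if_true]
    have : (i.val + 1) % 2 ≠ 0 := by omega
    simp [this]
  · have h0 : i.val % 2 = 1 := Nat.odd_iff.mp ho
    have h0' : ¬ (i.val % 2 = 0) := by omega
    simp only [h0', if_false]
    have : (i.val - 1) % 2 = 0 := by omega
    simp [this]; omega

lemma sigmaPerm_ne (i : Fin (2*m)) : sigmaPerm m i ≠ i := by
  intro h
  have := congrArg Fin.val h
  rw [sigmaPerm_val] at this
  have h := i.isLt
  split at this <;> omega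

lemma sigmaPerm_injective : Function.Injective (sigmaPerm m) := by
  intro a b h
  have := congrArg (sigmaPerm m) h
  rwa [sigmaPerm_sigmaPerm, sigmaPerm_sigmaPerm] at this

lemma sigmaPerm_val_lt {r : ℕ} (hr : r % 2 = 0) (i : Fin (2*m)) :
    (sigmaPerm m i).val < r ↔ i.val < r := by
  rw [sigmaPerm_val]
  have := i.isLt
  split <;> omega

lemma sigmaPerm_val_ge {r : ℕ} (hr : r % 2 = 0) (i : Fin (2*m)) :
    r ≤ (sigmaPerm m i).val ↔ r ≤ i.val := by
  have := sigmaPerm_val_lt (m := m) hr i; omega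

lemma phiMat_apply (i j : Fin (2*m)) :
    phiMat R m i j = if j = sigmaPerm m i then 1 else 0 := by
  unfold phiMat
  rw [Matrix.of_apply]
  have hj := j.isLt
  have hi := i.isLt
  rcases Nat.even_or_odd i.val with he | ho
  · have h0 : i.val % 2 = 0 := Nat.even_iff.mp he
    have : (j = sigmaPerm m i) ↔ j.val = i.val + 1 := by
      rw [Fin.ext_iff, sigmaPerm_val, if_pos h0]
    by_cases h : j.val = i.val + 1
    · simp [h, h0, this]
    · have : ¬ (j = sigmaPerm m i) := by rw [this]; exact h
      simp only [this, if_false, h0]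
      have : ¬ (j.val % 2 = 0 ∧ i.val = j.val + 1) := by
        rintro ⟨h1, h2⟩; omega
      simp [h, this]
  · have h0 : i.val % 2 = 1 := Nat.odd_iff.mp ho
    have key : (j = sigmaPerm m i) ↔ (j.val % 2 = 0 ∧ i.val = j.val + 1) := by
      rw [Fin.ext_iff, sigmaPerm_val, if_neg (by omega)]
      constructor
      · intro h; omega
      · intro ⟨h1, h2⟩; omega
    by_cases h : j.val % 2 = 0 ∧ i.val = j.val + 1
    · rw [if_pos (key.mpr h)]
      have : ¬ (i.val % 2 = 0 ∧ j.val = i.val + 1) := by omega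
      simp [this, h]
    · rw [if_neg (fun hh => h (key.mp hh))]
      have h1 : ¬ (i.val % 2 = 0 ∧ j.val = i.val + 1) := by omega
      simp [h1, h]

lemma phiMat_transpose : (phiMat R m)ᵀ = phiMat R m := by
  ext i j
  rw [Matrix.transpose_apply, phiMat_apply, phiMat_apply]
  by_cases h : i = sigmaPerm m j
  · have h2 : j = sigmaPerm m i := by rw [h, sigmaPerm_sigmaPerm]
    rw [if_pos h, if_pos h2]
  · have h2 : ¬ (j = sigmaPerm m i) := by
      intro hh; exact h (by rw [hh, sigmaPerm_sigmaPerm])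
    rw [if_neg h, if_neg h2]

/-- the standard basis (row) vector -/
def sb {R : Type*} [CommRing R] {N : ℕ} (i : Fin N) : Fin N → R :=
  fun k => if k = i then 1 else 0

lemma sb_apply {N : ℕ} (i k : Fin N) : (sb (R := R) i) k = if k = i then 1 else 0 := rfl

lemma dotProduct_sb {N : ℕ} (u : Fin N → R) (i : Fin N) : u ⬝ᵥ sb (R := R) i = u i := by
  simp [dotProduct, sb]

lemma sb_dotProduct {N : ℕ} (u : Fin N → R) (i : Fin N) : sb (R := R) i ⬝ᵥ u = u i := by
  simp [dotProduct, sb]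

lemma phiMat_mulVec (u : Fin (2*m) → R) (k : Fin (2*m)) :
    (phiMat R m *ᵥ u) k = u (sigmaPerm m k) := by
  simp only [Matrix.mulVec, dotProduct, phiMat_apply]
  simp

lemma phiMat_mulVec_sb (i : Fin (2*m)) :
    phiMat R m *ᵥ sb (R := R) i = sb (sigmaPerm m i) := by
  funext k
  rw [phiMat_mulVec, sb_apply, sb_apply]
  by_cases h : k = sigmaPerm m i
  · have h2 : sigmaPerm m k = i := by rw [h, sigmaPerm_sigmaPerm]
    rw [if_pos h, if_pos h2]
  · have h2 : ¬ (sigmaPerm m k = i) := by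
      intro hh; exact h (by rw [← hh, sigmaPerm_sigmaPerm])
    rw [if_neg h, if_neg h2]

lemma phiMat_mul_phiMat : phiMat R m * phiMat R m = 1 := by
  ext i j
  rw [Matrix.mul_apply]
  simp only [phiMat_apply]
  rw [Finset.sum_eq_single (sigmaPerm m i)]
  · rw [if_pos rfl, one_mul, sigmaPerm_sigmaPerm, Matrix.one_apply]
    by_cases h : j = i
    · rw [if_pos h, if_pos (h ▸ rfl)]
    · rw [if_neg h, if_neg (fun hh : i = j => h hh.symm)]
  · intro b _ hb
    rw [if_neg (fun hh : b = sigmaPerm m i => hb hh), zero_mul]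
  · simp

end Basic
section VMV
variable {R : Type*} [CommRing R] {m : ℕ}

lemma vmv_mul_vmv {N : ℕ} (a b c d : Fin N → R) :
    Matrix.vecMulVec a b * Matrix.vecMulVec c d = (b ⬝ᵥ c) • Matrix.vecMulVec a d := by
  ext i j
  simp [Matrix.mul_apply, Matrix.vecMulVec_apply, dotProduct, Finset.mul_sum,
    Finset.sum_mul]
  congr 1; funext k; ring

lemma mul_vmv {I : Type*} [Fintype I] {N : ℕ} (A : Matrix I (Fin N) R) (x y : Fin N → R) :
    A * Matrix.vecMulVec x y = Matrix.vecMulVec (A *ᵥ x) y := by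
  ext i j
  simp [Matrix.mul_apply, Matrix.vecMulVec_apply, Matrix.mulVec, dotProduct,
    Finset.sum_mul, mul_assoc]

lemma vmv_mul {I : Type*} {N : ℕ} (A : Matrix (Fin N) (Fin N) R) (x : I → R) (y : Fin N → R) :
    Matrix.vecMulVec x y * A = Matrix.vecMulVec x (Aᵀ *ᵥ y) := by
  ext i j
  simp [Matrix.mul_apply, Matrix.vecMulVec_apply, Matrix.mulVec, dotProduct,
    Finset.mul_sum, mul_comm, mul_assoc, mul_left_comm]

lemma sb_dot_sb {N : ℕ} (a b : Fin N) :
    (sb (R := R) a) ⬝ᵥ (sb b) = if a = b then 1 else 0 := by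
  rw [dotProduct_sb, sb_apply]; simp [eq_comm]

lemma stdBasisMatrix_eq_vmv {N : ℕ} (i j : Fin N) (z : R) :
    Matrix.single i j z = z • Matrix.vecMulVec (sb i) (sb j) := by
  ext a b
  simp only [Matrix.single, Matrix.smul_apply, Matrix.vecMulVec_apply, sb_apply,
    Matrix.of_apply, smul_eq_mul]
  by_cases h1 : a = i <;> by_cases h2 : b = j <;>
    simp [h1, h2, Ne.symm, eq_comm] <;> intro h <;> simp [h] at h1 h2 <;> tauto

lemma orthE_eq (i j : Fin (2*m)) (z : R) :
    orthE m i j z = 1 + z • Matrix.vecMulVec (sb i) (sb j)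
      - z • Matrix.vecMulVec (sb (sigmaPerm m j)) (sb (sigmaPerm m i)) := by
  rw [orthE, stdBasisMatrix_eq_vmv, stdBasisMatrix_eq_vmv]

/-- ESD transvection -/
def esd {R : Type*} [CommRing R] {m : ℕ} (u w : Fin (2*m) → R) (z : R) :
    Matrix (Fin (2*m)) (Fin (2*m)) R :=
  1 + z • Matrix.vecMulVec u w
    - z • Matrix.vecMulVec (phiMat R m *ᵥ w) (phiMat R m *ᵥ u)

lemma orthE_eq_esd (i j : Fin (2*m)) (z : R) :
    orthE m i j z = esd (sb i) (sb j) z := by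
  rw [orthE_eq, esd, phiMat_mulVec_sb, phiMat_mulVec_sb]

end VMV
section OrthE
variable {R : Type*} [CommRing R] {m : ℕ}

lemma vecMulVec_transpose' {N : ℕ} (a b : Fin N → R) :
    (Matrix.vecMulVec a b)ᵀ = Matrix.vecMulVec b a := by
  ext i j; simp [Matrix.vecMulVec_apply, mul_comm]

lemma orthE_mul_same {i j : Fin (2*m)} (hij : i ≠ j) (z z' : R) :
    orthE m i j z * orthE m i j z' = orthE m i j (z + z') := by
  have h1 : (sb (R := R) j) ⬝ᵥ (sb i) = 0 := by rw [sb_dot_sb, if_neg (Ne.symm hij)]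
  have h2 : (sb (R := R) j) ⬝ᵥ (sb (sigmaPerm m j)) = 0 := by
    rw [sb_dot_sb, if_neg (fun h => (sigmaPerm_ne j) h.symm)]
  have h3 : (sb (R := R) (sigmaPerm m i)) ⬝ᵥ (sb i) = 0 := by
    rw [sb_dot_sb, if_neg (sigmaPerm_ne i)]
  have h4 : (sb (R := R) (sigmaPerm m i)) ⬝ᵥ (sb (sigmaPerm m j)) = 0 := by
    rw [sb_dot_sb, if_neg (fun h => hij (sigmaPerm_injective h))]
  simp only [orthE_eq, mul_add, add_mul, mul_sub, sub_mul, one_mul, mul_one,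
    Matrix.smul_mul, Matrix.mul_smul, vmv_mul_vmv, h1, h2, h3, h4, zero_smul, smul_zero,
    add_smul]
  abel

lemma orthE_zero (i j : Fin (2*m)) : orthE m i j (0 : R) = 1 := by
  rw [orthE]; simp

lemma orthE_inv_mul {i j : Fin (2*m)} (hij : i ≠ j) (z : R) :
    orthE m i j z * orthE m i j (-z) = 1 ∧ orthE m i j (-z) * orthE m i j z = 1 := by
  constructor <;> rw [orthE_mul_same hij]
  · rw [add_neg_cancel, orthE_zero]
  · rw [neg_add_cancel, orthE_zero]

lemma orthE_isOrth {i j : Fin (2*m)} (hij : i ≠ j) (z : R) :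
    IsOrthogonalMat (orthE m i j z) := by
  rw [IsOrthogonalMat]
  have h1 : (sb (R := R) (sigmaPerm m i)) ⬝ᵥ (sb i) = 0 := by
    rw [sb_dot_sb, if_neg (sigmaPerm_ne i)]
  have h2 : (sb (R := R) (sigmaPerm m i)) ⬝ᵥ (sb (sigmaPerm m j)) = 0 := by
    rw [sb_dot_sb, if_neg (fun h => hij (sigmaPerm_injective h))]
  have h3 : (sb (R := R) j) ⬝ᵥ (sb i) = 0 := by rw [sb_dot_sb, if_neg (Ne.symm hij)]
  have h4 : (sb (R := R) j) ⬝ᵥ (sb (sigmaPerm m j)) = 0 := by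
    rw [sb_dot_sb, if_neg (fun h => (sigmaPerm_ne j) h.symm)]
  set X : Matrix (Fin (2*m)) (Fin (2*m)) R :=
    z • Matrix.vecMulVec (sb i) (sb j)
      - z • Matrix.vecMulVec (sb (sigmaPerm m j)) (sb (sigmaPerm m i)) with hX
  have horthE : orthE m i j z = 1 + X := by rw [orthE_eq, hX]; abel
  have hXX : X * X = 0 := by
    rw [hX]
    simp only [sub_mul, mul_sub, Matrix.smul_mul, Matrix.mul_smul, vmv_mul_vmv,
      h1, h2, h3, h4, zero_smul, smul_zero]
    abel
  have hXt : Xᵀ * phiMat R m = - (phiMat R m * X) := by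
    rw [hX]
    simp only [Matrix.transpose_sub, Matrix.transpose_smul, vecMulVec_transpose',
      sub_mul, mul_sub, Matrix.smul_mul, Matrix.mul_smul, vmv_mul, mul_vmv,
      phiMat_transpose, phiMat_mulVec_sb, sigmaPerm_sigmaPerm]
    abel
  rw [horthE]
  have expand : (1 + X)ᵀ * phiMat R m * (1 + X)
      = phiMat R m + (Xᵀ * phiMat R m + phiMat R m * X) + (Xᵀ * phiMat R m) * X := by
    simp only [Matrix.transpose_add, Matrix.transpose_one]
    noncomm_ring
  rw [expand, hXt]
  have : (-(phiMat R m * X)) * X = - (phiMat R m * (X * X)) := by noncomm_ring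
  rw [this, hXX]
  simp

lemma mul_isOrth {A B : Matrix (Fin (2*m)) (Fin (2*m)) R}
    (hA : IsOrthogonalMat A) (hB : IsOrthogonalMat B) : IsOrthogonalMat (A * B) := by
  rw [IsOrthogonalMat] at *
  rw [Matrix.transpose_mul]
  calc Bᵀ * Aᵀ * phiMat R m * (A * B) = Bᵀ * (Aᵀ * phiMat R m * A) * B := by
        noncomm_ring
    _ = phiMat R m := by rw [hA, hB]

lemma one_isOrth : IsOrthogonalMat (1 : Matrix (Fin (2*m)) (Fin (2*m)) R) := by
  rw [IsOrthogonalMat]; simp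

lemma EO_isOrth {α : Matrix (Fin (2*m)) (Fin (2*m)) R} (h : α ∈ EOGroup R m) :
    IsOrthogonalMat α := by
  induction h using Submonoid.closure_induction with
  | mem x hx =>
    obtain ⟨i, j, z, hij, _, rfl⟩ := hx
    exact orthE_isOrth hij z
  | one => exact one_isOrth
  | mul x y _ _ hx hy => exact mul_isOrth hx hy

lemma EO_inv {α : Matrix (Fin (2*m)) (Fin (2*m)) R} (h : α ∈ EOGroup R m) :
    ∃ α', α' ∈ EOGroup R m ∧ α * α' = 1 ∧ α' * α = 1 := by
  induction h using Submonoid.closure_induction with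
  | mem x hx =>
    obtain ⟨i, j, z, hij, hisj, rfl⟩ := hx
    exact ⟨orthE m i j (-z), Submonoid.subset_closure ⟨i, j, -z, hij, hisj, rfl⟩,
      (orthE_inv_mul hij z).1, (orthE_inv_mul hij z).2⟩
  | one => exact ⟨1, Submonoid.one_mem _, by simp, by simp⟩
  | mul x y hxm hym hx hy =>
    obtain ⟨x', hx', hx1, hx2⟩ := hx
    obtain ⟨y', hy', hy1, hy2⟩ := hy
    refine ⟨y' * x', Submonoid.mul_mem _ hy' hx', ?_, ?_⟩
    · calc x * y * (y' * x') = x * (y * y') * x' := by noncomm_ring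
        _ = 1 := by rw [hy1, mul_one, hx1]
    · calc y' * x' * (x * y) = y' * (x' * x) * y := by noncomm_ring
        _ = 1 := by rw [hx2, mul_one, hy2]

lemma orthE_map {R' : Type*} [CommRing R'] (f : R →+* R') (i j : Fin (2*m)) (z : R) :
    (orthE m i j z).map f = orthE m i j (f z) := by
  rw [orthE, orthE]
  ext a b
  simp [Matrix.single, Matrix.one_apply, Matrix.map_apply, apply_ite f]

lemma EO_map {R' : Type*} [CommRing R'] (f : R →+* R')
    {α : Matrix (Fin (2*m)) (Fin (2*m)) R} (h : α ∈ EOGroup R m) :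
    α.map f ∈ EOGroup R' m := by
  induction h using Submonoid.closure_induction with
  | mem x hx =>
    obtain ⟨i, j, z, hij, hisj, rfl⟩ := hx
    exact Submonoid.subset_closure ⟨i, j, f z, hij, hisj, (orthE_map f i j z)⟩
  | one =>
    have : (1 : Matrix (Fin (2*m)) (Fin (2*m)) R).map f = 1 := by
      ext a b; simp [Matrix.one_apply, Matrix.map_apply, apply_ite f]
    rw [this]; exact Submonoid.one_mem _
  | mul x y _ _ hx hy =>
    have : (x * y).map f = x.map f * y.map f := by
      ext a b; simp [Matrix.map_apply, Matrix.mul_apply, map_sum]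
    rw [this]; exact Submonoid.mul_mem _ hx hy

end OrthE
section Prods
variable {R : Type*} [CommRing R] {m : ℕ}

/-- `orthE m k l z - 1`. -/
def DM {R : Type*} [CommRing R] {m : ℕ} (k l : Fin (2*m)) (z : R) :
    Matrix (Fin (2*m)) (Fin (2*m)) R :=
  z • Matrix.vecMulVec (sb k) (sb l)
    - z • Matrix.vecMulVec (sb (sigmaPerm m l)) (sb (sigmaPerm m k))

lemma orthE_eq_one_add_DM (k l : Fin (2*m)) (z : R) :
    orthE m k l z = 1 + DM k l z := by
  rw [orthE_eq, DM]; abel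

lemma DM_mul_DM {k l l' : Fin (2*m)} (hlk : l ≠ k) (hl'k : l' ≠ k) (z z' : R) :
    DM k l z * DM k l' z'
      = if l = sigmaPerm m l' then
          (-(z * z')) • Matrix.vecMulVec (sb (R := R) k) (sb (sigmaPerm m k)) else 0 := by
  have d1 : (sb (R := R) l) ⬝ᵥ (sb k) = 0 := by rw [sb_dot_sb, if_neg hlk]
  have d3 : (sb (R := R) (sigmaPerm m k)) ⬝ᵥ (sb k) = 0 := by
    rw [sb_dot_sb, if_neg (sigmaPerm_ne k)]
  have d4 : (sb (R := R) (sigmaPerm m k)) ⬝ᵥ (sb (sigmaPerm m l')) = 0 := by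
    rw [sb_dot_sb, if_neg (fun h => hl'k (sigmaPerm_injective h).symm)]
  have d2 : (sb (R := R) l) ⬝ᵥ (sb (sigmaPerm m l')) = if l = sigmaPerm m l' then 1 else 0 :=
    sb_dot_sb _ _
  rw [DM, DM]
  by_cases h : l = sigmaPerm m l'
  · have d2' : (sb (R := R) l) ⬝ᵥ (sb (sigmaPerm m l')) = 1 := by
      rw [sb_dot_sb, if_pos h]
    rw [if_pos h]
    simp only [sub_mul, mul_sub, Matrix.smul_mul, Matrix.mul_smul, vmv_mul_vmv,
      d1, d3, d4, d2', zero_smul, smul_zero, smul_smul, one_smul]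
    module
  · have d2' : (sb (R := R) l) ⬝ᵥ (sb (sigmaPerm m l')) = 0 := by
      rw [sb_dot_sb, if_neg h]
    rw [if_neg h]
    simp only [sub_mul, mul_sub, Matrix.smul_mul, Matrix.mul_smul, vmv_mul_vmv,
      d1, d3, d4, d2', zero_smul, smul_zero, smul_smul, one_smul]
    module

lemma commD {k l l' : Fin (2*m)} (hlk : l ≠ k) (hl'k : l' ≠ k) (z z' : R) :
    Commute (orthE m k l z) (orthE m k l' z') := by
  unfold Commute SemiconjBy
  rw [orthE_eq_one_add_DM, orthE_eq_one_add_DM]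
  have h1 := DM_mul_DM hlk hl'k z z'
  have h2 := DM_mul_DM hl'k hlk z' z
  have hcond : (l = sigmaPerm m l') ↔ (l' = sigmaPerm m l) := by
    constructor <;> intro h <;> rw [h, sigmaPerm_sigmaPerm]
  simp only [mul_add, add_mul, one_mul, mul_one]
  rw [h1, h2]
  by_cases h : l = sigmaPerm m l'
  · rw [if_pos h, if_pos (hcond.mp h)]
    rw [show z' * z = z * z' by ring]
    abel
  · rw [if_neg h, if_neg (fun hh => h (hcond.mpr hh))]
    abel

lemma DM_mul_EK {k a : Fin (2*m)} (hak : a ≠ k) (z : R) :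
    DM k a z * Matrix.vecMulVec (sb (R := R) k) (sb (sigmaPerm m k)) = 0 := by
  have d1 : (sb (R := R) a) ⬝ᵥ (sb k) = 0 := by rw [sb_dot_sb, if_neg hak]
  have d3 : (sb (R := R) (sigmaPerm m k)) ⬝ᵥ (sb k) = 0 := by
    rw [sb_dot_sb, if_neg (sigmaPerm_ne k)]
  rw [DM]
  simp only [sub_mul, Matrix.smul_mul, vmv_mul_vmv, d1, d3, zero_smul, smul_zero, sub_zero,
    sub_self]

lemma prodD_eq (k : Fin (2*m)) (z : Fin (2*m) → R) (S : Finset (Fin (2*m)))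
    (hS : ∀ l ∈ S, l ≠ k) (comm : (↑S : Set (Fin (2*m))).Pairwise
      (Function.onFun Commute (fun l => orthE m k l (z l)))) :
    S.noncommProd (fun l => orthE m k l (z l)) comm
      = 1 + (∑ l ∈ S, DM k l (z l))
        - (∑ l ∈ S, if sigmaPerm m l ∈ S ∧ (sigmaPerm m l).val < l.val
            then z l * z (sigmaPerm m l) else 0)
          • Matrix.vecMulVec (sb (R := R) k) (sb (sigmaPerm m k)) := by
  classical
  induction S using Finset.induction_on with
  | empty => simp
  | @insert a S ha ih =>
    have hS' : ∀ l ∈ S, l ≠ k := fun l hl => hS l (Finset.mem_insert_of_mem hl)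
    have hak : a ≠ k := hS a (Finset.mem_insert_self a S)
    have comm' : (↑S : Set (Fin (2*m))).Pairwise
        (Function.onFun Commute (fun l => orthE m k l (z l))) :=
      comm.mono (by intro x hx; exact Finset.mem_insert_of_mem hx)
    rw [Finset.noncommProd_insert_of_notMem S a _ comm ha, ih hS' comm']
    -- expand the product
    rw [orthE_eq_one_add_DM]
    set EK := Matrix.vecMulVec (sb (R := R) k) (sb (sigmaPerm m k)) with hEK
    have hDsum : DM k a (z a) * (∑ l ∈ S, DM k l (z l))
        = -(if sigmaPerm m a ∈ S then (z a * z (sigmaPerm m a)) else 0) • EK := by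
      rw [Finset.mul_sum]
      have : ∀ l ∈ S, DM k a (z a) * DM k l (z l)
          = if l = sigmaPerm m a then (-(z a * z l)) • EK else 0 := by
        intro l hl
        rw [DM_mul_DM hak (hS' l hl)]
        by_cases h : l = sigmaPerm m a
        · rw [if_pos (by rw [h, sigmaPerm_sigmaPerm]), if_pos h]
        · rw [if_neg (fun hh => h (by rw [hh, sigmaPerm_sigmaPerm])), if_neg h]
      rw [Finset.sum_congr rfl this, Finset.sum_ite_eq' S (sigmaPerm m a)
        (fun l => (-(z a * z l)) • EK)]
      split <;> simp
    have hDEK : DM k a (z a) * EK = 0 := DM_mul_EK hak (z a)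
    have hcross : (∑ l ∈ Insert.insert a S, if sigmaPerm m l ∈ Insert.insert a S ∧ (sigmaPerm m l).val < l.val
            then z l * z (sigmaPerm m l) else 0)
        = (∑ l ∈ S, if sigmaPerm m l ∈ S ∧ (sigmaPerm m l).val < l.val
            then z l * z (sigmaPerm m l) else 0)
          + (if sigmaPerm m a ∈ S then z a * z (sigmaPerm m a) else 0) := by
      rw [Finset.sum_insert ha]
      by_cases hsa : sigmaPerm m a ∈ S
      · rw [← Finset.add_sum_erase _ _ hsa, ← Finset.add_sum_erase _ _ hsa]
        have herase : ∀ l ∈ S.erase (sigmaPerm m a),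
            (if sigmaPerm m l ∈ Insert.insert a S ∧ (sigmaPerm m l).val < l.val
              then z l * z (sigmaPerm m l) else 0)
            = (if sigmaPerm m l ∈ S ∧ (sigmaPerm m l).val < l.val
              then z l * z (sigmaPerm m l) else 0) := by
          intro l hl
          obtain ⟨hlne, hlS⟩ := Finset.mem_erase.mp hl
          have : sigmaPerm m l ∈ Insert.insert a S ↔ sigmaPerm m l ∈ S := by
            rw [Finset.mem_insert]
            constructor
            · rintro (h | h)
              · exfalso; apply hlne
                rw [← sigmaPerm_sigmaPerm (m := m) l, h]
              · exact h
            · exact Or.inr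
          simp only [this]
        rw [Finset.sum_congr rfl herase]
        have hne : a ≠ sigmaPerm m a := fun h => (sigmaPerm_ne a) h.symm
        have hvalne : (sigmaPerm m a).val ≠ a.val := fun h => (sigmaPerm_ne a) (Fin.ext h)
        have hterm2 : (if sigmaPerm m (sigmaPerm m a) ∈ Insert.insert a S ∧
              (sigmaPerm m (sigmaPerm m a)).val < (sigmaPerm m a).val
            then z (sigmaPerm m a) * z (sigmaPerm m (sigmaPerm m a)) else 0)
            = if a.val < (sigmaPerm m a).val then z a * z (sigmaPerm m a) else 0 := by
          rw [sigmaPerm_sigmaPerm]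
          have : a ∈ Insert.insert a S := Finset.mem_insert_self a S
          by_cases h : a.val < (sigmaPerm m a).val
          · rw [if_pos ⟨this, h⟩, if_pos h, mul_comm]
          · rw [if_neg (fun hh => h hh.2), if_neg h]
        have hterm3 : (if sigmaPerm m (sigmaPerm m a) ∈ S ∧
              (sigmaPerm m (sigmaPerm m a)).val < (sigmaPerm m a).val
            then z (sigmaPerm m a) * z (sigmaPerm m (sigmaPerm m a)) else 0) = 0 := by
          rw [sigmaPerm_sigmaPerm, if_neg (fun hh => ha hh.1)]
        have hsaI : sigmaPerm m a ∈ Insert.insert a S := Finset.mem_insert_of_mem hsa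
        rw [hterm2, hterm3]
        by_cases h : (sigmaPerm m a).val < a.val
        · rw [if_pos ⟨hsaI, h⟩, if_neg (by omega), if_pos hsa]; ring
        · rw [if_neg (fun hh => h hh.2), if_pos (by omega), if_pos hsa]; ring
      · have h1 : (if sigmaPerm m a ∈ Insert.insert a S ∧ (sigmaPerm m a).val < a.val
            then z a * z (sigmaPerm m a) else 0) = 0 := by
          rw [if_neg]
          rintro ⟨h, _⟩
          rcases Finset.mem_insert.mp h with h | h
          · exact sigmaPerm_ne a h
          · exact hsa h
        have h2 : ∀ l ∈ S,
            (if sigmaPerm m l ∈ Insert.insert a S ∧ (sigmaPerm m l).val < l.val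
              then z l * z (sigmaPerm m l) else 0)
            = (if sigmaPerm m l ∈ S ∧ (sigmaPerm m l).val < l.val
              then z l * z (sigmaPerm m l) else 0) := by
          intro l hl
          have : sigmaPerm m l ∈ Insert.insert a S ↔ sigmaPerm m l ∈ S := by
            rw [Finset.mem_insert]
            constructor
            · rintro (h | h)
              · exfalso; apply hsa
                have h3 : sigmaPerm m a = l := by rw [← h, sigmaPerm_sigmaPerm]
                rw [h3]; exact hl
              · exact h
            · exact Or.inr
          simp only [this]
        rw [Finset.sum_congr rfl h2, if_neg hsa, add_zero, h1, zero_add]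
    rw [Finset.sum_insert ha, hcross]
    have expand : ∀ (X Y E : Matrix (Fin (2*m)) (Fin (2*m)) R) (c : R),
        (1 + X) * (1 + Y - c • E) = 1 + X + Y - c • E + X * Y - c • (X * E) := by
      intro X Y E c
      simp only [mul_add, mul_sub, mul_one, add_mul, one_mul, Matrix.mul_smul]
      abel
    rw [expand, hDsum, hDEK, smul_zero, sub_zero]
    simp only [add_smul, neg_smul]
    abel

end Prods
section Spec
variable {R : Type*} [CommRing R] {m : ℕ}

lemma sigmaPerm_involutive : Function.Involutive (sigmaPerm m) := sigmaPerm_sigmaPerm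

lemma sum_sigmaPerm (f : Fin (2*m) → R) :
    ∑ l, f (sigmaPerm m l) = ∑ l, f l :=
  Function.Bijective.sum_comp (sigmaPerm_involutive.bijective) f

lemma dot_phi_self (u : Fin (2*m) → R) :
    u ⬝ᵥ (phiMat R m *ᵥ u) = ∑ l, u l * u (sigmaPerm m l) := by
  simp only [dotProduct, phiMat_mulVec]

lemma phi_dot_left (u v : Fin (2*m) → R) :
    (phiMat R m *ᵥ u) ⬝ᵥ v = u ⬝ᵥ (phiMat R m *ᵥ v) := by
  simp only [dotProduct, phiMat_mulVec]
  exact (Fintype.sum_bijective (sigmaPerm m) sigmaPerm_involutive.bijective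
    (fun l => u l * v (sigmaPerm m l)) (fun l => u (sigmaPerm m l) * v l)
    (fun x => by simp [sigmaPerm_sigmaPerm])).symm

lemma phi_dot_phi (u v : Fin (2*m) → R) :
    (phiMat R m *ᵥ u) ⬝ᵥ (phiMat R m *ᵥ v) = u ⬝ᵥ v := by
  simp only [dotProduct, phiMat_mulVec]
  exact Fintype.sum_bijective (sigmaPerm m) sigmaPerm_involutive.bijective
    (fun l => u (sigmaPerm m l) * v (sigmaPerm m l)) (fun l => u l * v l)
    (fun x => by simp [sigmaPerm_sigmaPerm])

lemma sum_DM_univ (p : Fin (2*m)) (u : Fin (2*m) → R) (z : R) :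
    ∑ l, DM p l (z * u l)
      = z • Matrix.vecMulVec (sb p) u
        - z • Matrix.vecMulVec (phiMat R m *ᵥ u) (sb (sigmaPerm m p)) := by
  unfold DM
  rw [Finset.sum_sub_distrib]
  congr 1
  · ext i j
    rw [Matrix.sum_apply]
    simp only [Matrix.smul_apply, Matrix.vecMulVec_apply, sb_apply, smul_eq_mul]
    rw [Finset.sum_eq_single j]
    · rw [if_pos rfl, mul_one]; ring
    · intro b _ hb
      rw [if_neg (fun hh : j = b => hb hh.symm), mul_zero, mul_zero]
    · intro h; exact absurd (Finset.mem_univ j) h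
  · ext i j
    rw [Matrix.sum_apply]
    simp only [Matrix.smul_apply, Matrix.vecMulVec_apply, sb_apply, smul_eq_mul,
      phiMat_mulVec]
    rw [Finset.sum_eq_single (sigmaPerm m i)]
    · rw [if_pos (by rw [sigmaPerm_sigmaPerm]), one_mul]; ring
    · intro b _ hb
      rw [if_neg (fun hh : i = sigmaPerm m b => hb (by rw [hh, sigmaPerm_sigmaPerm])),
        zero_mul, mul_zero]
    · intro h; exact absurd (Finset.mem_univ _) h

lemma mem_pairCompl {p l : Fin (2*m)} :
    l ∈ ({p, sigmaPerm m p}ᶜ : Finset (Fin (2*m))) ↔ l ≠ p ∧ l ≠ sigmaPerm m p := by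
  simp [Finset.mem_compl, Finset.mem_insert, not_or]

lemma Dspec_eq (h2 : IsUnit (2:R)) (p : Fin (2*m)) (u : Fin (2*m) → R) (z : R)
    (hup : u p = 0) (huσ : u (sigmaPerm m p) = 0) (hiso : u ⬝ᵥ (phiMat R m *ᵥ u) = 0)
    (comm : (↑({p, sigmaPerm m p}ᶜ : Finset (Fin (2*m))) : Set (Fin (2*m))).Pairwise
      (Function.onFun Commute (fun l => orthE m p l (z * u l)))) :
    ({p, sigmaPerm m p}ᶜ : Finset (Fin (2*m))).noncommProd
        (fun l => orthE m p l (z * u l)) comm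
      = 1 + z • Matrix.vecMulVec (sb p) u
          - z • Matrix.vecMulVec (phiMat R m *ᵥ u) (sb (sigmaPerm m p)) := by
  classical
  set S : Finset (Fin (2*m)) := {p, sigmaPerm m p}ᶜ with hSdef
  have hS : ∀ l ∈ S, l ≠ p := fun l hl => (mem_pairCompl.mp hl).1
  have hSσ : ∀ l ∈ S, sigmaPerm m l ∈ S := by
    intro l hl
    obtain ⟨h1, h2'⟩ := mem_pairCompl.mp hl
    refine mem_pairCompl.mpr ⟨?_, ?_⟩
    · intro h; apply h2'
      rw [← sigmaPerm_sigmaPerm (m := m) l, h]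
    · intro h; exact h1 (sigmaPerm_injective h)
  rw [prodD_eq p (fun l => z * u l) S hS comm]
  -- sum part
  have hsum : ∑ l ∈ S, DM p l (z * u l) = ∑ l, DM p l (z * u l) := by
    rw [← Finset.sum_compl_add_sum ({p, sigmaPerm m p} : Finset (Fin (2*m)))
      (fun l => DM p l (z * u l))]
    have hpair : ∑ l ∈ ({p, sigmaPerm m p} : Finset (Fin (2*m))), DM p l (z * u l) = 0 := by
      rw [Finset.sum_pair (fun h => sigmaPerm_ne p h.symm), hup, huσ, mul_zero]
      unfold DM
      simp
    rw [hpair, add_zero]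
  -- cross part
  have hcross : (∑ l ∈ S, if sigmaPerm m l ∈ S ∧ (sigmaPerm m l).val < l.val
      then (z * u l) * (z * u (sigmaPerm m l)) else 0) = 0 := by
    set g : Fin (2*m) → R := fun l => (z * u l) * (z * u (sigmaPerm m l)) with hg
    set c := ∑ l ∈ S, if sigmaPerm m l ∈ S ∧ (sigmaPerm m l).val < l.val then g l else 0 with hc
    have step1 : c = ∑ l ∈ S, if (sigmaPerm m l).val < l.val then g l else 0 := by
      apply Finset.sum_congr rfl
      intro l hl
      by_cases h : (sigmaPerm m l).val < l.val
      · rw [if_pos ⟨hSσ l hl, h⟩, if_pos h]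
      · rw [if_neg (fun hh => h hh.2), if_neg h]
    have step2 : (∑ l ∈ S, if l.val < (sigmaPerm m l).val then g l else 0)
        = ∑ l ∈ S, if (sigmaPerm m l).val < l.val then g l else 0 := by
      apply Finset.sum_nbij' (i := fun l => sigmaPerm m l) (j := fun l => sigmaPerm m l)
      · intro a ha; exact hSσ a ha
      · intro a ha; exact hSσ a ha
      · intro a _; exact sigmaPerm_sigmaPerm a
      · intro a _; exact sigmaPerm_sigmaPerm a
      · intro a _
        rw [sigmaPerm_sigmaPerm]
        by_cases h : a.val < (sigmaPerm m a).val
        · rw [if_pos h, if_pos h, hg]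
          simp only
          rw [sigmaPerm_sigmaPerm]
          ring
        · rw [if_neg h, if_neg h]
    have step3 : c + c = ∑ l ∈ S, g l := by
      rw [step1]
      nth_rewrite 1 [← step2]
      rw [← Finset.sum_add_distrib]
      apply Finset.sum_congr rfl
      intro l _
      have hlt := (sigmaPerm m l).isLt
      have hne : (sigmaPerm m l).val ≠ l.val := fun h => sigmaPerm_ne l (Fin.ext h)
      by_cases h : (sigmaPerm m l).val < l.val
      · rw [if_pos h, if_neg (by omega), zero_add]
      · rw [if_neg h, if_pos (by omega), add_zero]
    have step4 : ∑ l ∈ S, g l = 0 := by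
      have h5 : ∑ l ∈ ({p, sigmaPerm m p} : Finset (Fin (2*m))), g l = 0 := by
        rw [Finset.sum_pair (fun h => sigmaPerm_ne p h.symm)]
        simp [hg, hup, huσ]
      have h6 : ∑ l, g l = 0 := by
        have : ∑ l, g l = z * z * (u ⬝ᵥ (phiMat R m *ᵥ u)) := by
          rw [dot_phi_self, Finset.mul_sum]
          apply Finset.sum_congr rfl
          intro l _; rw [hg]; ring
        rw [this, hiso, mul_zero]
      have := Finset.sum_compl_add_sum ({p, sigmaPerm m p} : Finset (Fin (2*m))) g
      rw [h5, add_zero, h6] at this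
      exact this
    have h2c : (2 : R) * c = 0 := by rw [two_mul]; rw [step3, step4]
    exact (IsUnit.mul_right_eq_zero h2).mp h2c
  rw [hsum, hcross, sum_DM_univ, zero_smul, sub_zero, add_sub_assoc]

lemma commD_of_mem {p : Fin (2*m)} (z : Fin (2*m) → R) :
    (↑({p, sigmaPerm m p}ᶜ : Finset (Fin (2*m))) : Set (Fin (2*m))).Pairwise
      (Function.onFun Commute (fun l => orthE m p l (z l))) := by
  intro a ha b hb _
  have ha' : a ≠ p := (mem_pairCompl.mp (by exact_mod_cast ha)).1
  have hb' : b ≠ p := (mem_pairCompl.mp (by exact_mod_cast hb)).1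
  exact commD ha' hb' (z a) (z b)

lemma Dspec_mem (h2 : IsUnit (2:R)) (p : Fin (2*m)) (u : Fin (2*m) → R) (z : R)
    (hup : u p = 0) (huσ : u (sigmaPerm m p) = 0) (hiso : u ⬝ᵥ (phiMat R m *ᵥ u) = 0) :
    1 + z • Matrix.vecMulVec (sb p) u
      - z • Matrix.vecMulVec (phiMat R m *ᵥ u) (sb (sigmaPerm m p)) ∈ EOGroup R m := by
  rw [← Dspec_eq h2 p u z hup huσ hiso (commD_of_mem (fun l => z * u l))]
  apply Submonoid.noncommProd_mem
  intro l hl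
  obtain ⟨h1, h2'⟩ := mem_pairCompl.mp hl
  apply Submonoid.subset_closure
  refine ⟨p, l, z * u l, fun h => h1 h.symm, ?_, rfl⟩
  intro h
  apply h2'
  rw [← sigmaPerm_sigmaPerm (m := m) l, ← h]

lemma orthE_transpose (i j : Fin (2*m)) (z : R) :
    (orthE m i j z)ᵀ = orthE m j i z := by
  rw [orthE_eq, orthE_eq]
  simp only [Matrix.transpose_sub, Matrix.transpose_add, Matrix.transpose_one,
    Matrix.transpose_smul, vecMulVec_transpose']

lemma noncommProd_transpose {ι : Type*} [DecidableEq ι] {N : ℕ} (S : Finset ι)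
    (f : ι → Matrix (Fin N) (Fin N) R)
    (comm : (↑S : Set ι).Pairwise (Function.onFun Commute f))
    (comm2 : (↑S : Set ι).Pairwise (Function.onFun Commute (fun l => (f l)ᵀ))) :
    (S.noncommProd f comm)ᵀ = S.noncommProd (fun l => (f l)ᵀ) comm2 := by
  classical
  induction S using Finset.induction_on with
  | empty => simp
  | @insert a S ha ih =>
    have comm' : (↑S : Set ι).Pairwise (Function.onFun Commute f) :=
      comm.mono (by intro x hx; exact Finset.mem_insert_of_mem hx)
    have comm2' : (↑S : Set ι).Pairwise (Function.onFun Commute (fun l => (f l)ᵀ)) :=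
      comm2.mono (by intro x hx; exact Finset.mem_insert_of_mem hx)
    rw [Finset.noncommProd_insert_of_notMem S a f comm ha,
      Finset.noncommProd_insert_of_notMem S a _ comm2 ha,
      Matrix.transpose_mul, ih comm' comm2']
    -- need : transpose-prod commutes with (f a)ᵀ
    have hcomm : Commute ((f a)ᵀ) (S.noncommProd (fun l => (f l)ᵀ) comm2') := by
      apply Finset.noncommProd_commute
      intro y hy
      have : Commute (f a) (f y) := by
        rcases eq_or_ne a y with rfl | hne
        · exact Commute.refl _
        · exact comm (Finset.mem_insert_self a S) (Finset.mem_insert_of_mem hy) hne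
      unfold Commute SemiconjBy at this ⊢
      rw [← Matrix.transpose_mul, ← Matrix.transpose_mul, this]
    exact hcomm.symm.eq

lemma Cspec_mem (h2 : IsUnit (2:R)) (p : Fin (2*m)) (u : Fin (2*m) → R) (z : R)
    (hup : u p = 0) (huσ : u (sigmaPerm m p) = 0) (hiso : u ⬝ᵥ (phiMat R m *ᵥ u) = 0) :
    1 + z • Matrix.vecMulVec u (sb p)
      - z • Matrix.vecMulVec (sb (sigmaPerm m p)) (phiMat R m *ᵥ u) ∈ EOGroup R m := by
  have key : (1 + z • Matrix.vecMulVec (sb p) u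
      - z • Matrix.vecMulVec (phiMat R m *ᵥ u) (sb (sigmaPerm m p)))ᵀ
      = 1 + z • Matrix.vecMulVec u (sb p)
        - z • Matrix.vecMulVec (sb (sigmaPerm m p)) (phiMat R m *ᵥ u) := by
    simp only [Matrix.transpose_sub, Matrix.transpose_add, Matrix.transpose_one,
      Matrix.transpose_smul, vecMulVec_transpose']
  rw [← key, ← Dspec_eq h2 p u z hup huσ hiso (commD_of_mem (fun l => z * u l))]
  have comm2 : (↑({p, sigmaPerm m p}ᶜ : Finset (Fin (2*m))) : Set (Fin (2*m))).Pairwise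
      (Function.onFun Commute (fun l => (orthE m p l (z * u l))ᵀ)) := by
    intro a ha b hb hne
    have := commD_of_mem (m := m) (p := p) (fun l => z * u l) ha hb hne
    unfold Function.onFun Commute SemiconjBy at this ⊢
    rw [← Matrix.transpose_mul, ← Matrix.transpose_mul, this]
  rw [noncommProd_transpose _ _ _ comm2]
  apply Submonoid.noncommProd_mem
  intro l hl
  obtain ⟨h1, h2'⟩ := mem_pairCompl.mp hl
  rw [orthE_transpose]
  apply Submonoid.subset_closure
  refine ⟨l, p, z * u l, h1, h2', rfl⟩

end Spec
section Esd
variable {R : Type*} [CommRing R] {m : ℕ}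

lemma esd_mem_EO (h2 : IsUnit (2:R)) (u w : Fin (2*m) → R) (p : Fin (2*m)) (z : R)
    (hup : u p = 0) (huσ : u (sigmaPerm m p) = 0)
    (hwp : w p = 0) (hwσ : w (sigmaPerm m p) = 0)
    (hisoU : u ⬝ᵥ (phiMat R m *ᵥ u) = 0) (hisoW : w ⬝ᵥ (phiMat R m *ᵥ w) = 0)
    (horth : w ⬝ᵥ u = 0) :
    esd u w z ∈ EOGroup R m := by
  have hC1 := Cspec_mem h2 p u z hup huσ hisoU
  have hD1 := Dspec_mem h2 p w 1 hwp hwσ hisoW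
  have hC2 := Cspec_mem h2 p u (-z) hup huσ hisoU
  have hD2 := Dspec_mem h2 p w (-1) hwp hwσ hisoW
  have d1 : sb (R := R) p ⬝ᵥ u = 0 := by rw [sb_dotProduct, hup]
  have d2 : sb (R := R) p ⬝ᵥ sb (sigmaPerm m p) = 0 := by
    rw [sb_dot_sb, if_neg (fun h => sigmaPerm_ne p h.symm)]
  have d3 : sb (R := R) p ⬝ᵥ sb p = 1 := by rw [sb_dot_sb, if_pos rfl]
  have d4 : sb (R := R) p ⬝ᵥ (phiMat R m *ᵥ w) = 0 := by
    rw [sb_dotProduct, phiMat_mulVec, hwσ]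
  have d5 : (phiMat R m *ᵥ u) ⬝ᵥ u = 0 := by
    rw [phi_dot_left, hisoU]
  have d6 : (phiMat R m *ᵥ u) ⬝ᵥ sb (sigmaPerm m p) = 0 := by
    rw [dotProduct_sb, phiMat_mulVec, sigmaPerm_sigmaPerm, hup]
  have d7 : (phiMat R m *ᵥ u) ⬝ᵥ sb p = 0 := by
    rw [dotProduct_sb, phiMat_mulVec, huσ]
  have d8 : (phiMat R m *ᵥ u) ⬝ᵥ (phiMat R m *ᵥ w) = 0 := by
    rw [phi_dot_phi, ← horth, dotProduct_comm]
  have d9 : w ⬝ᵥ u = 0 := horth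
  have d10 : w ⬝ᵥ sb (R := R) (sigmaPerm m p) = 0 := by rw [dotProduct_sb, hwσ]
  have d11 : w ⬝ᵥ sb (R := R) p = 0 := by rw [dotProduct_sb, hwp]
  have d12 : w ⬝ᵥ (phiMat R m *ᵥ w) = 0 := hisoW
  have d13 : sb (R := R) (sigmaPerm m p) ⬝ᵥ u = 0 := by rw [sb_dotProduct, huσ]
  have d14 : sb (R := R) (sigmaPerm m p) ⬝ᵥ sb (sigmaPerm m p) = 1 := by
    rw [sb_dot_sb, if_pos rfl]
  have d15 : sb (R := R) (sigmaPerm m p) ⬝ᵥ sb p = 0 := by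
    rw [sb_dot_sb, if_neg (sigmaPerm_ne p)]
  have d16 : sb (R := R) (sigmaPerm m p) ⬝ᵥ (phiMat R m *ᵥ w) = 0 := by
    rw [sb_dotProduct, phiMat_mulVec, sigmaPerm_sigmaPerm, hwp]
  have key : esd u w z
      = (1 + z • Matrix.vecMulVec u (sb p)
          - z • Matrix.vecMulVec (sb (sigmaPerm m p)) (phiMat R m *ᵥ u))
        * (1 + (1:R) • Matrix.vecMulVec (sb p) w
          - (1:R) • Matrix.vecMulVec (phiMat R m *ᵥ w) (sb (sigmaPerm m p)))
        * (1 + (-z) • Matrix.vecMulVec u (sb p)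
          - (-z) • Matrix.vecMulVec (sb (sigmaPerm m p)) (phiMat R m *ᵥ u))
        * (1 + (-1:R) • Matrix.vecMulVec (sb p) w
          - (-1:R) • Matrix.vecMulVec (phiMat R m *ᵥ w) (sb (sigmaPerm m p))) := by
    rw [esd]
    simp only [add_mul, mul_add, sub_mul, mul_sub, Matrix.smul_mul, Matrix.mul_smul,
      one_mul, mul_one, vmv_mul_vmv, d1, d2, d3, d4, d5, d6, d7, d8, d9, d10, d11, d12,
      d13, d14, d15, d16, zero_smul, smul_zero, one_smul, smul_smul, mul_zero, zero_mul,
      sub_zero, zero_sub, add_zero, zero_add]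
    module
  rw [key]
  exact Submonoid.mul_mem _ (Submonoid.mul_mem _ (Submonoid.mul_mem _ hC1 hD1) hC2) hD2

end Esd
section Blocks
variable {R : Type*} [CommRing R]

def finSumCast {k d N : ℕ} (h : k + d = N) : Fin k ⊕ Fin d ≃ Fin N :=
  finSumFinEquiv.trans (finCongr h)

lemma finSumCast_inl {k d N : ℕ} (h : k + d = N) (x : Fin k) :
    (finSumCast h (Sum.inl x)).val = x.val := by
  simp [finSumCast]

lemma finSumCast_inr {k d N : ℕ} (h : k + d = N) (x : Fin d) :
    (finSumCast h (Sum.inr x)).val = k + x.val := by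
  simp [finSumCast]

lemma matPerpId_eq_reindex {k d N : ℕ} (h : k + d = N) (A : Matrix (Fin k) (Fin k) R) :
    matPerpId N A = Matrix.reindex (finSumCast h) (finSumCast h)
      (Matrix.fromBlocks A 0 0 (1 : Matrix (Fin d) (Fin d) R)) := by
  ext i j
  rw [Matrix.reindex_apply, Matrix.submatrix_apply]
  have hi : i = (finSumCast h) ((finSumCast h).symm i) := (Equiv.apply_symm_apply _ _).symm
  have hj : j = (finSumCast h) ((finSumCast h).symm j) := (Equiv.apply_symm_apply _ _).symm
  rcases ha : (finSumCast h).symm i with x | x <;> rcases hb : (finSumCast h).symm j with y | y <;>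
    rw [ha] at hi <;> rw [hb] at hj
  · 
    have hiv : i.val = x.val := by rw [hi, finSumCast_inl]
    have hjv : j.val = y.val := by rw [hj, finSumCast_inl]
    rw [Matrix.fromBlocks_apply₁₁, matPerpId, Matrix.of_apply,
      dif_pos (by rw [hiv]; exact x.isLt), dif_pos (by rw [hjv]; exact y.isLt)]
    congr 1 <;> apply Fin.ext <;> simpa
  · 
    have hiv : i.val = x.val := by rw [hi, finSumCast_inl]
    have hjv : j.val = k + y.val := by rw [hj, finSumCast_inr]
    rw [Matrix.fromBlocks_apply₁₂, matPerpId, Matrix.of_apply,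
      dif_pos (by rw [hiv]; exact x.isLt), dif_neg (by omega)]
    rfl
  · 
    have hiv : i.val = k + x.val := by rw [hi, finSumCast_inr]
    have hjv : j.val = y.val := by rw [hj, finSumCast_inl]
    rw [Matrix.fromBlocks_apply₂₁, matPerpId, Matrix.of_apply, dif_neg (by omega)]
    have : ¬ (i = j) := by
      intro hh; rw [hh] at hiv
      have := y.isLt; omega
    rw [if_neg this]
    rfl
  · 
    have hiv : i.val = k + x.val := by rw [hi, finSumCast_inr]
    have hjv : j.val = k + y.val := by rw [hj, finSumCast_inr]
    rw [Matrix.fromBlocks_apply₂₂, matPerpId, Matrix.of_apply, dif_neg (by omega),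
      Matrix.one_apply]
    have : (i = j) ↔ (x = y) := by
      rw [Fin.ext_iff, Fin.ext_iff, hiv, hjv]; omega
    by_cases hxy : x = y
    · rw [if_pos (this.mpr hxy), if_pos hxy]
    · rw [if_neg (fun hh => hxy (this.mp hh)), if_neg hxy]

lemma matPerpId_det {k d N : ℕ} (h : k + d = N) (A : Matrix (Fin k) (Fin k) R) :
    (matPerpId N A).det = A.det := by
  rw [matPerpId_eq_reindex h, Matrix.det_reindex_self,
    Matrix.det_fromBlocks_zero₂₁, Matrix.det_one, mul_one]

lemma matPerpId_map {R' : Type*} [CommRing R'] (f : R →+* R') {k N : ℕ}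
    (A : Matrix (Fin k) (Fin k) R) :
    (matPerpId N A).map f = matPerpId N (A.map f) := by
  ext i j
  rw [Matrix.map_apply, matPerpId, matPerpId, Matrix.of_apply, Matrix.of_apply]
  by_cases hi : i.val < k
  · rw [dif_pos hi, dif_pos hi]
    by_cases hj : j.val < k
    · rw [dif_pos hj, dif_pos hj, Matrix.map_apply]
    · rw [dif_neg hj, dif_neg hj, map_zero]
  · rw [dif_neg hi, dif_neg hi]
    by_cases hij : i = j
    · rw [if_pos hij, if_pos hij, _root_.map_one]
    · rw [if_neg hij, if_neg hij, map_zero]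

lemma matPerpId_one {k N : ℕ} (hkN : k ≤ N) :
    matPerpId N (1 : Matrix (Fin k) (Fin k) R) = 1 := by
  ext i j
  rw [matPerpId, Matrix.of_apply, Matrix.one_apply]
  by_cases hi : i.val < k
  · rw [dif_pos hi]
    by_cases hj : j.val < k
    · rw [dif_pos hj, Matrix.one_apply]
      have : ((⟨i.val, hi⟩ : Fin k) = ⟨j.val, hj⟩) ↔ i = j := by
        rw [Fin.ext_iff, Fin.ext_iff]
      by_cases hij : i = j
      · rw [if_pos (this.mpr hij), if_pos hij]
      · rw [if_neg (fun hh => hij (this.mp hh)), if_neg hij]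
    · rw [dif_neg hj, if_neg (by intro hh; rw [hh] at hi; exact hj hi)]
  · rw [dif_neg hi]

variable {n m : ℕ}

lemma phiMat_blocks (hnm : n ≤ m) :
    phiMat R m = Matrix.reindex (finSumCast (show 2*n + 2*(m-n) = 2*m by omega))
      (finSumCast (by omega))
      (Matrix.fromBlocks (phiMat R n) 0 0 (phiMat R (m-n))) := by
  have h : 2*n + 2*(m-n) = 2*m := by omega
  ext i j
  rw [Matrix.reindex_apply, Matrix.submatrix_apply]
  have hi : i = (finSumCast h) ((finSumCast h).symm i) := (Equiv.apply_symm_apply _ _).symm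
  have hj : j = (finSumCast h) ((finSumCast h).symm j) := (Equiv.apply_symm_apply _ _).symm
  rcases ha : (finSumCast h).symm i with x | x <;> rcases hb : (finSumCast h).symm j with y | y <;>
    rw [ha] at hi <;> rw [hb] at hj
  · 
    have hiv : i.val = x.val := by rw [hi, finSumCast_inl]
    have hjv : j.val = y.val := by rw [hj, finSumCast_inl]
    rw [Matrix.fromBlocks_apply₁₁, phiMat, phiMat, Matrix.of_apply, Matrix.of_apply,
      hiv, hjv]
  · 
    have hiv : i.val = x.val := by rw [hi, finSumCast_inl]
    have hjv : j.val = 2*n + y.val := by rw [hj, finSumCast_inr]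
    rw [Matrix.fromBlocks_apply₁₂, phiMat, Matrix.of_apply]
    have hx := x.isLt
    rw [if_neg (by omega), if_neg (by omega)]
    rfl
  · 
    have hiv : i.val = 2*n + x.val := by rw [hi, finSumCast_inr]
    have hjv : j.val = y.val := by rw [hj, finSumCast_inl]
    rw [Matrix.fromBlocks_apply₂₁, phiMat, Matrix.of_apply]
    have hy := y.isLt
    rw [if_neg (by omega), if_neg (by omega)]
    rfl
  · 
    have hiv : i.val = 2*n + x.val := by rw [hi, finSumCast_inr]
    have hjv : j.val = 2*n + y.val := by rw [hj, finSumCast_inr]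
    rw [Matrix.fromBlocks_apply₂₂, phiMat, phiMat, Matrix.of_apply, Matrix.of_apply,
      hiv, hjv]
    have c1 : ((2*n + x.val) % 2 = 0) ↔ (x.val % 2 = 0) := by omega
    have c2 : (2*n + y.val = 2*n + x.val + 1) ↔ (y.val = x.val + 1) := by omega
    have c3 : ((2*n + y.val) % 2 = 0) ↔ (y.val % 2 = 0) := by omega
    have c4 : (2*n + x.val = 2*n + y.val + 1) ↔ (x.val = y.val + 1) := by omega
    rw [if_congr (and_congr c1 c2) rfl (if_congr (and_congr c3 c4) rfl rfl)]

lemma matPerpId_isOrth (hnm : n ≤ m) (γ : Matrix (Fin (2*n)) (Fin (2*n)) R)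
    (hγ : IsOrthogonalMat γ) : IsOrthogonalMat (matPerpId (2*m) γ) := by
  have h : 2*n + 2*(m-n) = 2*m := by omega
  rw [IsOrthogonalMat, matPerpId_eq_reindex h, phiMat_blocks hnm]
  rw [Matrix.reindex_apply, Matrix.reindex_apply, Matrix.transpose_submatrix,
    Matrix.submatrix_mul_equiv, Matrix.submatrix_mul_equiv]
  congr 1
  rw [Matrix.fromBlocks_transpose, Matrix.fromBlocks_multiply, Matrix.fromBlocks_multiply]
  rw [IsOrthogonalMat] at hγ
  simp only [Matrix.transpose_zero, Matrix.transpose_one, Matrix.mul_zero, Matrix.zero_mul,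
    Matrix.mul_one, Matrix.one_mul, add_zero, zero_add]
  rw [hγ]

end Blocks
section Conj
variable {R : Type*} [CommRing R] {m : ℕ}

lemma isOrth_left_inv {β : Matrix (Fin (2*m)) (Fin (2*m)) R} (h : IsOrthogonalMat β) :
    (phiMat R m * βᵀ * phiMat R m) * β = 1 ∧ β * (phiMat R m * βᵀ * phiMat R m) = 1 := by
  rw [IsOrthogonalMat] at h
  have h1 : (phiMat R m * βᵀ * phiMat R m) * β = 1 := by
    calc (phiMat R m * βᵀ * phiMat R m) * β = phiMat R m * (βᵀ * phiMat R m * β) := by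
          noncomm_ring
      _ = phiMat R m * phiMat R m := by rw [h]
      _ = 1 := phiMat_mul_phiMat
  exact ⟨h1, mul_eq_one_comm.mp h1⟩

lemma isOrth_flip {β : Matrix (Fin (2*m)) (Fin (2*m)) R} (h : IsOrthogonalMat β) :
    β * phiMat R m * βᵀ = phiMat R m := by
  obtain ⟨h1, h2⟩ := isOrth_left_inv h
  have hβt : phiMat R m * (phiMat R m * βᵀ * phiMat R m) * phiMat R m = βᵀ := by
    calc phiMat R m * (phiMat R m * βᵀ * phiMat R m) * phiMat R m
        = (phiMat R m * phiMat R m) * βᵀ * (phiMat R m * phiMat R m) := by noncomm_ring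
      _ = βᵀ := by rw [phiMat_mul_phiMat]; simp
  calc β * phiMat R m * βᵀ
      = β * phiMat R m * (phiMat R m * (phiMat R m * βᵀ * phiMat R m) * phiMat R m) := by
        rw [hβt]
    _ = (β * (phiMat R m * phiMat R m)) * (phiMat R m * βᵀ * phiMat R m) * phiMat R m := by
        noncomm_ring
    _ = β * (phiMat R m * βᵀ * phiMat R m) * phiMat R m := by rw [phiMat_mul_phiMat]; simp
    _ = phiMat R m := by rw [h2]; simp

lemma isOrth_inv {β : Matrix (Fin (2*m)) (Fin (2*m)) R} (h : IsOrthogonalMat β) :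
    IsOrthogonalMat (phiMat R m * βᵀ * phiMat R m) := by
  rw [IsOrthogonalMat]
  have hφφ := phiMat_mul_phiMat (R := R) (m := m)
  have ht : (phiMat R m * βᵀ * phiMat R m)ᵀ = phiMat R m * β * phiMat R m := by
    simp only [Matrix.transpose_mul, Matrix.transpose_transpose, phiMat_transpose]
    noncomm_ring
  rw [ht]
  calc (phiMat R m * β * phiMat R m) * phiMat R m * (phiMat R m * βᵀ * phiMat R m)
      = phiMat R m * β * ((phiMat R m * phiMat R m) * (phiMat R m * βᵀ)) * phiMat R m := by
        noncomm_ring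
    _ = phiMat R m * (β * phiMat R m * βᵀ) * phiMat R m := by rw [hφφ, one_mul]; noncomm_ring
    _ = phiMat R m * phiMat R m * phiMat R m := by rw [isOrth_flip h]
    _ = phiMat R m := by rw [hφφ, one_mul]

lemma mulVec_dot {N : ℕ} (A : Matrix (Fin N) (Fin N) R) (x y : Fin N → R) :
    (A *ᵥ x) ⬝ᵥ y = x ⬝ᵥ (Aᵀ *ᵥ y) := by
  rw [dotProduct_comm, Matrix.dotProduct_mulVec, dotProduct_comm]
  congr 1
  rw [← Matrix.vecMul_transpose, Matrix.transpose_transpose]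

lemma mulVec_sb {I : Type*} {N : ℕ} (A : Matrix I (Fin N) R) (i : Fin N) (q : I) :
    (A *ᵥ sb (R := R) i) q = A q i := by
  simp [Matrix.mulVec, dotProduct_sb]

lemma phiMat_mul_apply {I : Type*} [Fintype I] (A : Matrix (Fin (2*m)) I R) (q : Fin (2*m)) (r : I) :
    (phiMat R m * A) q r = A (sigmaPerm m q) r := by
  rw [Matrix.mul_apply]
  rw [Finset.sum_eq_single (sigmaPerm m q)]
  · rw [phiMat_apply, if_pos rfl, one_mul]
  · intro b _ hb
    rw [phiMat_apply, if_neg hb, zero_mul]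
  · intro h; exact absurd (Finset.mem_univ _) h

lemma mul_phiMat_apply {I : Type*} [Fintype I] (A : Matrix I (Fin (2*m)) R) (q : I) (r : Fin (2*m)) :
    (A * phiMat R m) q r = A q (sigmaPerm m r) := by
  rw [Matrix.mul_apply]
  rw [Finset.sum_eq_single (sigmaPerm m r)]
  · rw [phiMat_apply, sigmaPerm_sigmaPerm, if_pos rfl, mul_one]
  · intro b _ hb
    rw [phiMat_apply, if_neg (fun hh : r = sigmaPerm m b => hb (by rw [hh, sigmaPerm_sigmaPerm])),
      mul_zero]
  · intro h; exact absurd (Finset.mem_univ _) h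

end Conj

section ConjMain
variable {R : Type*} [CommRing R] {n m : ℕ}

lemma matPerpId_apply_lt {k N : ℕ} (A : Matrix (Fin k) (Fin k) R) {i j : Fin N}
    (hi : i.val < k) (hj : j.val < k) :
    matPerpId N A i j = A ⟨i.val, hi⟩ ⟨j.val, hj⟩ := by
  rw [matPerpId, Matrix.of_apply, dif_pos hi, dif_pos hj]

lemma matPerpId_apply_lt_ge {k N : ℕ} (A : Matrix (Fin k) (Fin k) R) {i j : Fin N}
    (hi : i.val < k) (hj : ¬ j.val < k) : matPerpId N A i j = 0 := by
  rw [matPerpId, Matrix.of_apply, dif_pos hi, dif_neg hj]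

lemma matPerpId_apply_ge {k N : ℕ} (A : Matrix (Fin k) (Fin k) R) {i : Fin N}
    (hi : ¬ i.val < k) (j : Fin N) : matPerpId N A i j = if i = j then 1 else 0 := by
  rw [matPerpId, Matrix.of_apply, dif_neg hi]

set_option maxHeartbeats 2000000 in
lemma conj_orthE_mem (hnm : n + 2 ≤ m) (γ : Matrix (Fin (2*n)) (Fin (2*n)) R)
    (hγ : IsOrthogonalMat γ) (h2 : IsUnit (2 : R))
    (i j : Fin (2*m)) (hij : i ≠ j) (hisj : i ≠ sigmaPerm m j) (z : R) :
    (phiMat R m * (matPerpId (2*m) γ)ᵀ * phiMat R m) * orthE m i j z * matPerpId (2*m) γ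
      ∈ EOGroup R m := by
  have heven : (2*n) % 2 = 0 := by omega
  set β := matPerpId (2*m) γ with hβ
  set Bi := phiMat R m * βᵀ * phiMat R m with hBi
  have hβorth : IsOrthogonalMat β := matPerpId_isOrth (by omega) γ hγ
  have hβ'orth : IsOrthogonalMat Bi := isOrth_inv hβorth
  obtain ⟨hBiβ, hβBi⟩ := isOrth_left_inv hβorth
  set u : Fin (2*m) → R := Bi *ᵥ sb i with hu_def
  set w : Fin (2*m) → R := βᵀ *ᵥ sb j with hw_def
  -- entry formulas
  have hu : ∀ q, u q = matPerpId (2*m) γ (sigmaPerm m i) (sigmaPerm m q) := by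
    intro q
    rw [hu_def, mulVec_sb, hBi, mul_phiMat_apply, phiMat_mul_apply, Matrix.transpose_apply]
  have hw : ∀ q, w q = matPerpId (2*m) γ j q := by
    intro q
    rw [hw_def, mulVec_sb, Matrix.transpose_apply]
  -- mulVec identities
  have h1v : Bi *ᵥ sb (sigmaPerm m j) = phiMat R m *ᵥ w := by
    rw [hBi, hw_def, ← Matrix.mulVec_mulVec, ← Matrix.mulVec_mulVec,
      phiMat_mulVec_sb, sigmaPerm_sigmaPerm, Matrix.mulVec_mulVec]
  have h2v : βᵀ *ᵥ sb (sigmaPerm m i) = phiMat R m *ᵥ u := by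
    rw [hu_def, Matrix.mulVec_mulVec, hBi]
    have : phiMat R m * (phiMat R m * βᵀ * phiMat R m) = βᵀ * phiMat R m := by
      calc phiMat R m * (phiMat R m * βᵀ * phiMat R m)
          = (phiMat R m * phiMat R m) * (βᵀ * phiMat R m) := by noncomm_ring
        _ = βᵀ * phiMat R m := by rw [phiMat_mul_phiMat, one_mul]
    rw [this, ← Matrix.mulVec_mulVec, phiMat_mulVec_sb]
  -- key : the conjugate is an ESD transvection
  have key0 : Bi * orthE m i j z * β = esd u w z := by
    rw [orthE_eq, esd]
    simp only [mul_add, add_mul, mul_sub, sub_mul, mul_one, one_mul,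
      Matrix.mul_smul, Matrix.smul_mul]
    rw [mul_vmv, vmv_mul, mul_vmv, vmv_mul, h1v, h2v]
    have e1 : Bi * β = 1 := hBiβ
    calc Bi * β + z • Matrix.vecMulVec (Bi *ᵥ sb i) (βᵀ *ᵥ sb j)
          - z • Matrix.vecMulVec (phiMat R m *ᵥ w) (phiMat R m *ᵥ u)
        = 1 + z • Matrix.vecMulVec u w
          - z • Matrix.vecMulVec (phiMat R m *ᵥ w) (phiMat R m *ᵥ u) := by
          rw [e1, ← hu_def, ← hw_def]
      _ = _ := rfl
  -- dot products
  have hisoU : u ⬝ᵥ (phiMat R m *ᵥ u) = 0 := by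
    rw [hu_def, Matrix.mulVec_mulVec, mulVec_dot, Matrix.mulVec_mulVec,
      ← Matrix.mul_assoc]
    rw [IsOrthogonalMat] at hβ'orth
    rw [hβ'orth, phiMat_mulVec_sb, sb_dot_sb,
      if_neg (fun h => sigmaPerm_ne i h.symm)]
  have hisoW : w ⬝ᵥ (phiMat R m *ᵥ w) = 0 := by
    rw [hw_def, Matrix.mulVec_mulVec, mulVec_dot, Matrix.transpose_transpose,
      Matrix.mulVec_mulVec, ← Matrix.mul_assoc, isOrth_flip hβorth, phiMat_mulVec_sb,
      sb_dot_sb, if_neg (fun h => sigmaPerm_ne j h.symm)]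
  have horth : w ⬝ᵥ u = 0 := by
    rw [hw_def, mulVec_dot, Matrix.transpose_transpose, hu_def, Matrix.mulVec_mulVec,
      hβBi, Matrix.one_mulVec, sb_dot_sb, if_neg (Ne.symm hij)]
  by_cases hcase : 2*n ≤ i.val ∧ 2*n ≤ j.val
  · -- both outside : conjugate is the same generator
    have huA : u = sb i := by
      funext q
      rw [hu q, sb_apply, matPerpId_apply_ge _ (by rw [sigmaPerm_val_lt heven]; omega)]
      by_cases h : q = i
      · rw [if_pos (by rw [h]), if_pos h]
      · rw [if_neg (fun hh => h (sigmaPerm_injective hh).symm), if_neg h]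
    have hwA : w = sb j := by
      funext q
      rw [hw q, sb_apply, matPerpId_apply_ge _ (by omega)]
      by_cases h : q = j
      · rw [if_pos h.symm, if_pos h]
      · rw [if_neg (fun hh => h hh.symm), if_neg h]
    rw [key0, huA, hwA, ← orthE_eq_esd]
    exact Submonoid.subset_closure ⟨i, j, z, hij, hisj, rfl⟩
  · -- at most one of i, j is outside the γ-block
    rw [not_and_or, not_le, not_le] at hcase
    have hp2m : (if (2*n ≤ i.val ∧ i.val < 2*n+2) ∨ (2*n ≤ j.val ∧ j.val < 2*n+2)
        then 2*n+2 else 2*n) < 2*m := by split <;> omega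
    set p : Fin (2*m) := ⟨_, hp2m⟩ with hp
    have hpval : p.val = if (2*n ≤ i.val ∧ i.val < 2*n+2) ∨ (2*n ≤ j.val ∧ j.val < 2*n+2)
        then 2*n+2 else 2*n := rfl
    have hpge : 2*n ≤ p.val := by rw [hpval]; split <;> omega
    have hpe : p.val % 2 = 0 := by rw [hpval]; split <;> omega
    have hσpval : (sigmaPerm m p).val = p.val + 1 := by
      rw [sigmaPerm_val, if_pos hpe]
    have hip : 2*n ≤ i.val → (i.val ≠ p.val ∧ i.val ≠ p.val + 1) := by
      intro hi2
      have hj2 : j.val < 2*n := by rcases hcase with h | h; omega; exact h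
      rw [hpval]
      by_cases hc : (2*n ≤ i.val ∧ i.val < 2*n+2) ∨ (2*n ≤ j.val ∧ j.val < 2*n+2)
      · rw [if_pos hc]
        rcases hc with h | h <;> omega
      · rw [if_neg hc]
        push_neg at hc
        have := hc.1 hi2
        omega
    have hjp : 2*n ≤ j.val → (j.val ≠ p.val ∧ j.val ≠ p.val + 1) := by
      intro hj2
      have hi2 : i.val < 2*n := by rcases hcase with h | h; exact h; omega
      rw [hpval]
      by_cases hc : (2*n ≤ i.val ∧ i.val < 2*n+2) ∨ (2*n ≤ j.val ∧ j.val < 2*n+2)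
      · rw [if_pos hc]
        rcases hc with h | h <;> omega
      · rw [if_neg hc]
        push_neg at hc
        have := hc.2 hj2
        omega
    have hup : u p = 0 := by
      rw [hu p]
      by_cases hi2 : i.val < 2*n
      · exact matPerpId_apply_lt_ge _ (by rw [sigmaPerm_val_lt heven]; omega)
          (by rw [sigmaPerm_val_lt heven]; omega)
      · rw [matPerpId_apply_ge _ (by rw [sigmaPerm_val_lt heven]; omega)]
        rw [if_neg]
        intro hh
        have := congrArg Fin.val (sigmaPerm_injective hh)
        exact (hip (by omega)).1 this
    have huσ : u (sigmaPerm m p) = 0 := by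
      rw [hu (sigmaPerm m p), sigmaPerm_sigmaPerm]
      by_cases hi2 : i.val < 2*n
      · exact matPerpId_apply_lt_ge _ (by rw [sigmaPerm_val_lt heven]; omega) (by omega)
      · rw [matPerpId_apply_ge _ (by rw [sigmaPerm_val_lt heven]; omega)]
        rw [if_neg]
        intro hh
        have hi_eq : i = sigmaPerm m p := by
          rw [← sigmaPerm_sigmaPerm (m := m) i, hh]
        have := congrArg Fin.val hi_eq
        rw [hσpval] at this
        exact (hip (by omega)).2 this
    have hwp : w p = 0 := by
      rw [hw p]
      by_cases hj2 : j.val < 2*n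
      · exact matPerpId_apply_lt_ge _ hj2 (by omega)
      · rw [matPerpId_apply_ge _ hj2]
        rw [if_neg]
        intro hh
        exact (hjp (by omega)).1 (congrArg Fin.val hh)
    have hwσ : w (sigmaPerm m p) = 0 := by
      rw [hw (sigmaPerm m p)]
      by_cases hj2 : j.val < 2*n
      · exact matPerpId_apply_lt_ge _ hj2 (by rw [sigmaPerm_val_lt heven]; omega)
      · rw [matPerpId_apply_ge _ hj2]
        rw [if_neg]
        intro hh
        have := congrArg Fin.val hh
        rw [hσpval] at this
        exact (hjp (by omega)).2 this
    rw [key0]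
    exact esd_mem_EO h2 u w p z hup huσ hwp hwσ hisoU hisoW horth

lemma conj_EO_mem (hnm : n + 2 ≤ m) (γ : Matrix (Fin (2*n)) (Fin (2*n)) R)
    (hγ : IsOrthogonalMat γ) (h2 : IsUnit (2 : R))
    {α : Matrix (Fin (2*m)) (Fin (2*m)) R} (hα : α ∈ EOGroup R m) :
    (phiMat R m * (matPerpId (2*m) γ)ᵀ * phiMat R m) * α * matPerpId (2*m) γ
      ∈ EOGroup R m := by
  have hβorth : IsOrthogonalMat (matPerpId (2*m) γ) := matPerpId_isOrth (by omega) γ hγ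
  obtain ⟨hBiβ, hβBi⟩ := isOrth_left_inv hβorth
  induction hα using Submonoid.closure_induction with
  | mem x hx =>
    obtain ⟨i, j, z, hij, hisj, rfl⟩ := hx
    exact conj_orthE_mem hnm γ hγ h2 i j hij hisj z
  | one =>
    have : (phiMat R m * (matPerpId (2*m) γ)ᵀ * phiMat R m) * 1 * matPerpId (2*m) γ
        = 1 := by rw [mul_one]; exact hBiβ
    rw [this]; exact Submonoid.one_mem _
  | mul x y _ _ hx hy =>
    have : (phiMat R m * (matPerpId (2*m) γ)ᵀ * phiMat R m) * (x * y) * matPerpId (2*m) γ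
        = ((phiMat R m * (matPerpId (2*m) γ)ᵀ * phiMat R m) * x * matPerpId (2*m) γ)
          * ((phiMat R m * (matPerpId (2*m) γ)ᵀ * phiMat R m) * y * matPerpId (2*m) γ) := by
      calc (phiMat R m * (matPerpId (2*m) γ)ᵀ * phiMat R m) * (x * y) * matPerpId (2*m) γ
          = (phiMat R m * (matPerpId (2*m) γ)ᵀ * phiMat R m) * x
            * (matPerpId (2*m) γ * ((phiMat R m * (matPerpId (2*m) γ)ᵀ * phiMat R m)))
            * y * matPerpId (2*m) γ := by rw [hβBi]; noncomm_ring
        _ = _ := by noncomm_ring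
    rw [this]
    exact Submonoid.mul_mem _ hx hy

end ConjMain
section Reduce
variable {R : Type*} [CommRing R] {n m : ℕ}

/-- the standard `(I 0)` rectangular matrix -/
def Jmat (R : Type*) [CommRing R] (n m : ℕ) : Matrix (Fin (2*n)) (Fin (2*m)) R :=
  Matrix.of fun i j => if i.val = j.val then 1 else 0

/-- `W` is obtained from `V` by multiplying by an element of `EO` on the right. -/
def GoodStep {R : Type*} [CommRing R] {n m : ℕ} (W W' : Matrix (Fin (2*n)) (Fin (2*m)) R) :
    Prop :=
  ∃ ε ∈ EOGroup R m, W' = W * ε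

lemma GoodStep.refl (W : Matrix (Fin (2*n)) (Fin (2*m)) R) : GoodStep W W :=
  ⟨1, Submonoid.one_mem _, by rw [Matrix.mul_one]⟩

lemma GoodStep.trans {W W' W'' : Matrix (Fin (2*n)) (Fin (2*m)) R}
    (h1 : GoodStep W W') (h2 : GoodStep W' W'') : GoodStep W W'' := by
  obtain ⟨e1, he1, rfl⟩ := h1
  obtain ⟨e2, he2, rfl⟩ := h2
  exact ⟨e1 * e2, Submonoid.mul_mem _ he1 he2, by rw [Matrix.mul_assoc]⟩

lemma GoodStep.orth {W W' : Matrix (Fin (2*n)) (Fin (2*m)) R}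
    (h : GoodStep W W') (hW : W * phiMat R m * Wᵀ = phiMat R n) :
    W' * phiMat R m * W'ᵀ = phiMat R n := by
  obtain ⟨e, he, rfl⟩ := h
  have horth := isOrth_flip (EO_isOrth he)
  calc W * e * phiMat R m * (W * e)ᵀ = W * (e * phiMat R m * eᵀ) * Wᵀ := by
        rw [Matrix.transpose_mul]; simp only [Matrix.mul_assoc]
    _ = W * phiMat R m * Wᵀ := by rw [horth]
    _ = phiMat R n := hW

lemma GoodStep.rinv {W W' : Matrix (Fin (2*n)) (Fin (2*m)) R}
    (h : GoodStep W W') (hW : ∃ B : Matrix (Fin (2*m)) (Fin (2*n)) R, W * B = 1) :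
    ∃ B : Matrix (Fin (2*m)) (Fin (2*n)) R, W' * B = 1 := by
  obtain ⟨e, he, rfl⟩ := h
  obtain ⟨B, hB⟩ := hW
  obtain ⟨e', _, hee', he'e⟩ := EO_inv he
  exact ⟨e' * B, by
    calc W * e * (e' * B) = W * (e * e') * B := by simp only [Matrix.mul_assoc]
      _ = 1 := by rw [hee', Matrix.mul_one, hB]⟩

/-- standardness of the first `t` rows -/
def Std {R : Type*} [CommRing R] {n m : ℕ} (t : ℕ)
    (W : Matrix (Fin (2*n)) (Fin (2*m)) R) : Prop :=
  ∀ (s : Fin (2*n)) (j : Fin (2*m)), s.val < t → W s j = if s.val = j.val then 1 else 0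

/-- coordinates `< 2t` of any later row vanish -/
lemma vanish_lemma {W : Matrix (Fin (2*n)) (Fin (2*m)) R} {t : ℕ} (ht : 2*t ≤ 2*n)
    (hW : W * phiMat R m * Wᵀ = phiMat R n) (hstd : Std (2*t) W)
    (r : Fin (2*n)) (hr : 2*t ≤ r.val) :
    ∀ s : Fin (2*m), s.val < 2*t → W r s = 0 := by
  intro s hs
  -- pair with the standard row whose index is σ s
  have hσs : (sigmaPerm m s).val < 2*t := by rw [sigmaPerm_val_lt (by omega)]; exact hs
  have hσs2n : (sigmaPerm m s).val < 2*n := by omega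
  set s' : Fin (2*n) := ⟨(sigmaPerm m s).val, hσs2n⟩ with hs'
  have horth := congrFun (congrFun hW r) s'
  rw [Matrix.mul_apply] at horth
  have hterm : ∀ k : Fin (2*m), (W * phiMat R m) r k * Wᵀ k s'
      = if k = sigmaPerm m s then W r (sigmaPerm m k) else 0 := by
    intro k
    rw [Matrix.transpose_apply, hstd s' k hσs, mul_phiMat_apply]
    by_cases h : k = sigmaPerm m s
    · rw [if_pos (show s'.val = k.val by rw [hs', h]), mul_one, if_pos h]
    · rw [if_neg (fun hh : s'.val = k.val => h (Fin.ext (by rw [← hh, hs']))), mul_zero,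
        if_neg h]
  rw [Finset.sum_congr rfl (fun k _ => hterm k)] at horth
  rw [Finset.sum_ite_eq' Finset.univ (sigmaPerm m s)
    (fun k => W r (sigmaPerm m k))] at horth
  simp only [Finset.mem_univ, if_true] at horth
  rw [sigmaPerm_sigmaPerm] at horth
  rw [horth, phiMat_apply]
  rw [if_neg]
  intro hh
  have h1 := congrArg Fin.val hh
  have h2 : 2*t ≤ (sigmaPerm n r).val := (sigmaPerm_val_ge (m := n) (by omega) r).mpr hr
  rw [hs'] at h1
  simp only at h1
  omega

/-- over a local ring, a later row has a unit coordinate in the free columns -/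
lemma unit_lemma [IsLocalRing R] {W : Matrix (Fin (2*n)) (Fin (2*m)) R} {t : ℕ}
    (ht : 2*t ≤ 2*n) (hW : W * phiMat R m * Wᵀ = phiMat R n) (hstd : Std (2*t) W)
    (hWinv : ∃ B : Matrix (Fin (2*m)) (Fin (2*n)) R, W * B = 1)
    (r : Fin (2*n)) (hr : 2*t ≤ r.val) :
    ∃ k : Fin (2*m), 2*t ≤ k.val ∧ IsUnit (W r k) := by
  by_contra hcon
  push_neg at hcon
  obtain ⟨B, hB⟩ := hWinv
  have h1 : (W * B) r r = 1 := by rw [hB, Matrix.one_apply_eq]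
  rw [Matrix.mul_apply] at h1
  have hmem : (1 : R) ∈ IsLocalRing.maximalIdeal R := by
    rw [← h1]
    apply Ideal.sum_mem
    intro k _
    by_cases hk : 2*t ≤ k.val
    · exact Ideal.mul_mem_right _ _
        ((IsLocalRing.mem_maximalIdeal _).mpr (hcon k hk))
    · rw [vanish_lemma ht hW hstd r hr k (by omega), zero_mul]
      exact Ideal.zero_mem _
  exact (Ideal.ne_top_iff_one _).mp (Ideal.IsMaximal.ne_top inferInstance) hmem

/-- entry formula for a single elementary column operation -/
lemma entry_single (W : Matrix (Fin (2*n)) (Fin (2*m)) R) (k l : Fin (2*m)) (z : R)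
    (i : Fin (2*n)) (j : Fin (2*m)) :
    (W * orthE m k l z) i j = W i j + (if j = l then z * W i k else 0)
      - (if j = sigmaPerm m k then z * W i (sigmaPerm m l) else 0) := by
  rw [orthE_eq]
  rw [Matrix.mul_sub, Matrix.mul_add, Matrix.mul_one, Matrix.mul_smul, Matrix.mul_smul,
    mul_vmv, mul_vmv]
  rw [Matrix.sub_apply, Matrix.add_apply, Matrix.smul_apply, Matrix.smul_apply,
    Matrix.vecMulVec_apply, Matrix.vecMulVec_apply, mulVec_sb, mulVec_sb, sb_apply, sb_apply]
  congr 1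
  · congr 1
    by_cases h : j = l <;> simp [h, mul_comm]
  · by_cases h : j = sigmaPerm m k <;> simp [h, mul_comm]

/-- entry formula for the big clearing product -/
lemma entry_prod (W : Matrix (Fin (2*n)) (Fin (2*m)) R) (k : Fin (2*m))
    (zf : Fin (2*m) → R) (S : Finset (Fin (2*m))) (c : R)
    (i : Fin (2*n)) (j : Fin (2*m)) :
    (W * ((1 + (∑ l ∈ S, DM k l (zf l))
        - c • Matrix.vecMulVec (sb (R := R) k) (sb (sigmaPerm m k)))
        : Matrix (Fin (2*m)) (Fin (2*m)) R)) i j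
      = W i j + (if j ∈ S then zf j * W i k else 0)
        - (if j = sigmaPerm m k then (∑ l ∈ S, zf l * W i (sigmaPerm m l)) + c * W i k
           else 0) := by
  rw [Matrix.mul_sub, Matrix.mul_add, Matrix.mul_one, Matrix.mul_smul, mul_vmv,
    Matrix.mul_sum]
  rw [Matrix.sub_apply, Matrix.add_apply, Matrix.smul_apply, Matrix.vecMulVec_apply,
    mulVec_sb, sb_apply, Matrix.sum_apply]
  have hterm : ∀ l ∈ S, (W * DM k l (zf l)) i j
      = (if j = l then zf l * W i k else 0)
        - (if j = sigmaPerm m k then zf l * W i (sigmaPerm m l) else 0) := by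
    intro l _
    rw [DM, Matrix.mul_sub, Matrix.mul_smul, Matrix.mul_smul, mul_vmv, mul_vmv]
    rw [Matrix.sub_apply, Matrix.smul_apply, Matrix.smul_apply, Matrix.vecMulVec_apply,
      Matrix.vecMulVec_apply, mulVec_sb, mulVec_sb, sb_apply, sb_apply]
    congr 1
    · by_cases h : j = l <;> simp [h, mul_comm]
    · by_cases h : j = sigmaPerm m k <;> simp [h, mul_comm]
  rw [Finset.sum_congr rfl hterm, Finset.sum_sub_distrib]
  have hsum1 : (∑ l ∈ S, if j = l then zf l * W i k else 0)
      = if j ∈ S then zf j * W i k else 0 := by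
    have hcongr : ∀ l ∈ S, (if j = l then zf l * W i k else 0)
        = (if l = j then zf l * W i k else 0) := by
      intro l _
      by_cases h : j = l
      · rw [if_pos h, if_pos h.symm]
      · rw [if_neg h, if_neg (fun hh => h hh.symm)]
    rw [Finset.sum_congr rfl hcongr, Finset.sum_ite_eq' S j (fun l => zf l * W i k)]
  have hsum2 : (∑ l ∈ S, if j = sigmaPerm m k then zf l * W i (sigmaPerm m l) else 0)
      = if j = sigmaPerm m k then (∑ l ∈ S, zf l * W i (sigmaPerm m l)) else 0 := by
    by_cases h : j = sigmaPerm m k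
    · simp only [if_pos h]
    · simp only [if_neg h, Finset.sum_const_zero]
  rw [hsum1, hsum2]
  by_cases h : j = sigmaPerm m k
  · rw [if_pos h, if_pos h, if_pos h, smul_eq_mul]
    ring
  · rw [if_neg h, if_neg h, if_neg h, smul_eq_mul]
    ring

end Reduce
section Phases
variable {R : Type*} [CommRing R] {n m : ℕ}

lemma cross_half {zf : Fin (2*m) → R} {S : Finset (Fin (2*m))}
    (hSσ : ∀ l ∈ S, sigmaPerm m l ∈ S) :
    (∑ l ∈ S, if sigmaPerm m l ∈ S ∧ (sigmaPerm m l).val < l.val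
        then zf l * zf (sigmaPerm m l) else 0)
      + (∑ l ∈ S, if sigmaPerm m l ∈ S ∧ (sigmaPerm m l).val < l.val
        then zf l * zf (sigmaPerm m l) else 0)
      = ∑ l ∈ S, zf l * zf (sigmaPerm m l) := by
  set g : Fin (2*m) → R := fun l => zf l * zf (sigmaPerm m l) with hg
  have step1 : (∑ l ∈ S, if sigmaPerm m l ∈ S ∧ (sigmaPerm m l).val < l.val then g l else 0)
      = ∑ l ∈ S, if (sigmaPerm m l).val < l.val then g l else 0 := by
    apply Finset.sum_congr rfl
    intro l hl
    by_cases h : (sigmaPerm m l).val < l.val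
    · rw [if_pos ⟨hSσ l hl, h⟩, if_pos h]
    · rw [if_neg (fun hh => h hh.2), if_neg h]
  have step2 : (∑ l ∈ S, if l.val < (sigmaPerm m l).val then g l else 0)
      = ∑ l ∈ S, if (sigmaPerm m l).val < l.val then g l else 0 := by
    apply Finset.sum_nbij' (i := fun l => sigmaPerm m l) (j := fun l => sigmaPerm m l)
    · intro a ha; exact hSσ a ha
    · intro a ha; exact hSσ a ha
    · intro a _; exact sigmaPerm_sigmaPerm a
    · intro a _; exact sigmaPerm_sigmaPerm a
    · intro a _
      rw [sigmaPerm_sigmaPerm]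
      by_cases h : a.val < (sigmaPerm m a).val
      · rw [if_pos h, if_pos h, hg]
        simp only
        rw [sigmaPerm_sigmaPerm]
        ring
      · rw [if_neg h, if_neg h]
  rw [step1]
  nth_rewrite 1 [← step2]
  rw [← Finset.sum_add_distrib]
  apply Finset.sum_congr rfl
  intro l _
  have hne : (sigmaPerm m l).val ≠ l.val := fun h => sigmaPerm_ne l (Fin.ext h)
  by_cases h : (sigmaPerm m l).val < l.val
  · rw [if_pos h, if_neg (by omega), zero_add]
  · rw [if_neg h, if_pos (by omega), add_zero]

lemma clear_row (h2 : IsUnit (2:R)) {t : ℕ}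
    (W : Matrix (Fin (2*n)) (Fin (2*m)) R)
    (hWorth : W * phiMat R m * Wᵀ = phiMat R n)
    (rr : Fin (2*n)) (k : Fin (2*m))
    (hk_ge : 2*t ≤ k.val) (hk_lt : k.val < 2*t+2)
    (hone : W rr k = 1)
    (hvan : ∀ s : Fin (2*m), s.val < 2*t → W rr s = 0) :
    ∃ W', GoodStep W W' ∧ (∀ j, W' rr j = if k.val = j.val then 1 else 0) ∧
      (∀ (i : Fin (2*n)) (j : Fin (2*m)), W i k = 0 →
        (∀ l : Fin (2*m), 2*t+2 ≤ l.val → W i l = 0) → W' i j = W i j) := by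
  classical
  have hσk : (sigmaPerm m k).val = (if k.val % 2 = 0 then k.val + 1 else k.val - 1) :=
    sigmaPerm_val k
  have hpair : k.val + (sigmaPerm m k).val = 4*t + 1 := by
    rw [hσk]; split <;> omega
  have hσk_ge : 2*t ≤ (sigmaPerm m k).val := by omega
  have hσk_lt : (sigmaPerm m k).val < 2*t+2 := by omega
  have hkσk : k ≠ sigmaPerm m k := fun h => sigmaPerm_ne k h.symm
  set S : Finset (Fin (2*m)) := Finset.univ.filter (fun l => 2*t+2 ≤ l.val) with hSdef
  have hmemS : ∀ l : Fin (2*m), l ∈ S ↔ 2*t+2 ≤ l.val := by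
    intro l; rw [hSdef, Finset.mem_filter]; simp
  have hSσ : ∀ l ∈ S, sigmaPerm m l ∈ S := by
    intro l hl
    rw [hmemS] at *
    rw [sigmaPerm_val_ge (by omega)]
    exact hl
  have hSk : ∀ l ∈ S, l ≠ k := by
    intro l hl h
    rw [hmemS] at hl
    omega
  set zf : Fin (2*m) → R := fun l => -(W rr l) with hzf
  have comm : (↑S : Set (Fin (2*m))).Pairwise
      (Function.onFun Commute (fun l => orthE m k l (zf l))) := by
    intro a ha b hb _
    exact commD (hSk a (by exact_mod_cast ha)) (hSk b (by exact_mod_cast hb)) _ _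
  -- isotropy of the row
  have hiso : ∑ l, W rr l * W rr (sigmaPerm m l) = 0 := by
    have h0 := congrFun (congrFun hWorth rr) rr
    rw [Matrix.mul_apply] at h0
    have hterm : ∀ l : Fin (2*m), (W * phiMat R m) rr l * Wᵀ l rr
        = W rr (sigmaPerm m l) * W rr l := by
      intro l
      rw [Matrix.transpose_apply, mul_phiMat_apply]
    rw [Finset.sum_congr rfl (fun l _ => hterm l)] at h0
    rw [phiMat_apply, if_neg (fun h => sigmaPerm_ne rr h.symm)] at h0
    rw [← h0]
    apply Finset.sum_congr rfl
    intro l _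
    ring
  -- split the isotropy sum
  have hsplit := Finset.sum_filter_add_sum_filter_not Finset.univ
    (fun l : Fin (2*m) => 2*t+2 ≤ l.val) (fun l => W rr l * W rr (sigmaPerm m l))
  have hrest : (∑ l ∈ Finset.univ.filter (fun l : Fin (2*m) => ¬ 2*t+2 ≤ l.val),
      W rr l * W rr (sigmaPerm m l)) = W rr (sigmaPerm m k) + W rr (sigmaPerm m k) := by
    have hsub : ({k, sigmaPerm m k} : Finset (Fin (2*m)))
        ⊆ Finset.univ.filter (fun l : Fin (2*m) => ¬ 2*t+2 ≤ l.val) := by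
      intro a ha
      rw [Finset.mem_insert, Finset.mem_singleton] at ha
      rw [Finset.mem_filter]
      rcases ha with rfl | rfl
      · exact ⟨Finset.mem_univ _, by omega⟩
      · exact ⟨Finset.mem_univ _, by omega⟩
    rw [← Finset.sum_subset hsub]
    · rw [Finset.sum_pair hkσk, sigmaPerm_sigmaPerm, hone, one_mul, mul_one]
    · intro l hl hnotl
      rw [Finset.mem_filter, not_le] at hl
      rw [Finset.mem_insert, Finset.mem_singleton] at hnotl
      push_neg at hnotl
      have : l.val < 2*t := by
        rcases Nat.lt_or_ge l.val (2*t) with h | h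
        · exact h
        · exfalso
          have h1 : l.val = k.val ∨ l.val = (sigmaPerm m k).val := by omega
          rcases h1 with h1 | h1
          · exact hnotl.1 (Fin.ext h1)
          · exact hnotl.2 (Fin.ext h1)
      rw [hvan l this, zero_mul]
  have hSsum : (∑ l ∈ S, W rr l * W rr (sigmaPerm m l))
      = -(W rr (sigmaPerm m k) + W rr (sigmaPerm m k)) := by
    rw [hSdef]
    have h5 := hsplit
    rw [hrest] at h5
    linear_combination h5 + hiso
  -- the cross scalar
  set c := (∑ l ∈ S, if sigmaPerm m l ∈ S ∧ (sigmaPerm m l).val < l.val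
      then zf l * zf (sigmaPerm m l) else 0) with hc
  have hcval : c = -(W rr (sigmaPerm m k)) := by
    have hch := cross_half (zf := zf) (S := S) hSσ
    rw [← hc] at hch
    have hzz : (∑ l ∈ S, zf l * zf (sigmaPerm m l))
        = ∑ l ∈ S, W rr l * W rr (sigmaPerm m l) := by
      apply Finset.sum_congr rfl
      intro l _
      rw [hzf]; ring
    rw [hzz, hSsum] at hch
    have h22 : (2:R) * (c + W rr (sigmaPerm m k)) = 0 := by linear_combination hch
    have h23 := (IsUnit.mul_right_eq_zero h2).mp h22
    linear_combination h23
  -- the product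
  have hSk' : ∀ l ∈ S, l ≠ k := hSk
  have hprod := prodD_eq k zf S hSk' comm
  refine ⟨W * S.noncommProd (fun l => orthE m k l (zf l)) comm, ?_, ?_, ?_⟩
  · refine ⟨_, ?_, rfl⟩
    apply Submonoid.noncommProd_mem
    intro l hl
    apply Submonoid.subset_closure
    refine ⟨k, l, zf l, fun h => (hSk l hl) h.symm, ?_, rfl⟩
    intro h
    have hkl : sigmaPerm m k = l := by rw [h, sigmaPerm_sigmaPerm]
    have hmem := hl
    rw [← hkl, hmemS] at hmem
    omega
  · intro j
    rw [hprod, ← hc, entry_prod]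
    by_cases hj1 : j = k
    · rw [hj1, hone]
      rw [if_neg (by rw [hmemS]; omega), if_neg hkσk]
      rw [if_pos rfl]
      ring
    · by_cases hj2 : j = sigmaPerm m k
      · rw [hj2, if_neg (by rw [hmemS]; omega), if_pos rfl]
        have hsum : (∑ l ∈ S, zf l * W rr (sigmaPerm m l))
            = -(∑ l ∈ S, W rr l * W rr (sigmaPerm m l)) := by
          rw [← Finset.sum_neg_distrib]
          apply Finset.sum_congr rfl
          intro l _
          rw [hzf]; ring
        rw [hsum, hSsum, hcval, hone]
        rw [if_neg (by omega)]
        ring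
      · by_cases hjS : j ∈ S
        · rw [if_pos hjS, if_neg hj2, hzf]
          simp only
          rw [hone]
          rw [if_neg (by rw [hmemS] at hjS; omega)]
          ring
        · -- j.val < 2t
          have hjval : j.val < 2*t := by
            rw [hmemS] at hjS
            rcases Nat.lt_or_ge j.val (2*t) with h | h
            · exact h
            · exfalso
              have h1 : j.val = k.val ∨ j.val = (sigmaPerm m k).val := by omega
              rcases h1 with h1 | h1
              · exact hj1 (Fin.ext h1)
              · exact hj2 (Fin.ext h1)
          rw [if_neg hjS, if_neg hj2, hvan j hjval, if_neg (by omega)]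
          ring
  · intro i j hik hirest
    rw [hprod, ← hc, entry_prod, hik]
    have hterm : (∑ l ∈ S, zf l * W i (sigmaPerm m l)) = 0 := by
      apply Finset.sum_eq_zero
      intro l hl
      rw [hirest (sigmaPerm m l) (by rw [← hmemS]; exact hSσ l hl), mul_zero]
    rw [hterm]
    split <;> split <;> ring

end Phases
section PhaseA
variable {R : Type*} [CommRing R] {n m : ℕ}

lemma std_preserved_single {t : ℕ} {W : Matrix (Fin (2*n)) (Fin (2*m)) R}
    (hstd : Std (2*t) W) (k l : Fin (2*m)) (hk : 2*t ≤ k.val) (hl : 2*t ≤ l.val) (z : R) :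
    Std (2*t) (W * orthE m k l z) := by
  intro s j hs
  rw [entry_single]
  have h1 : W s k = 0 := by rw [hstd s k hs, if_neg (by omega)]
  have h2 : W s (sigmaPerm m l) = 0 := by
    rw [hstd s _ hs, if_neg (by have := (sigmaPerm_val_ge (m := m) (by omega) l).mpr hl; omega)]
  simp only [h1, h2, mul_zero, ite_self, add_zero, sub_zero]
  exact hstd s j hs

lemma phaseA [IsLocalRing R] {t : ℕ} (htn : t < n) (hnm : n + 1 ≤ m)
    (W : Matrix (Fin (2*n)) (Fin (2*m)) R)
    (hWorth : W * phiMat R m * Wᵀ = phiMat R n)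
    (hWinv : ∃ B : Matrix (Fin (2*m)) (Fin (2*n)) R, W * B = 1)
    (hstd : Std (2*t) W) :
    ∃ W', GoodStep W W' ∧ Std (2*t) W' ∧
      W' ⟨2*t, by omega⟩ (⟨2*t, by omega⟩ : Fin (2*m)) = 1 := by
  set r : Fin (2*n) := ⟨2*t, by omega⟩ with hr
  set p0 : Fin (2*m) := ⟨2*t, by omega⟩ with hp0
  have hrv : r.val = 2*t := rfl
  have hp0v : p0.val = 2*t := rfl
  have hσp0 : (sigmaPerm m p0).val = 2*t+1 := by
    rw [sigmaPerm_val, hp0v, if_pos (by omega)]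
  obtain ⟨k, hk_ge, hk_unit⟩ := unit_lemma (by omega) hWorth hstd hWinv r (by omega)
  obtain ⟨b, hb⟩ := hk_unit.exists_right_inv
  by_cases hk2 : 2*t + 2 ≤ k.val
  · -- one operation suffices
    set z := b * (1 - W r p0) with hz
    have hσk_ge : 2*t+2 ≤ (sigmaPerm m k).val := (sigmaPerm_val_ge (by omega) k).mpr hk2
    refine ⟨W * orthE m k p0 z, ⟨_, Submonoid.subset_closure
      ⟨k, p0, z, fun h => by have := congrArg Fin.val h; omega,
        fun h => by have := congrArg Fin.val h; omega, rfl⟩, rfl⟩,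
      std_preserved_single hstd k p0 (by omega) (by omega) z, ?_⟩
    rw [entry_single, if_pos rfl, if_neg (fun h : p0 = sigmaPerm m k => by
      have := congrArg Fin.val h; omega)]
    rw [hz]
    have hzz : b * (1 - W r p0) * W r k = (W r k * b) * (1 - W r p0) := by ring
    rw [hzz, hb]
    ring
  · -- bounce through column 2t+2
    have hk_lt : k.val < 2*t+2 := by omega
    set p2 : Fin (2*m) := ⟨2*t+2, by omega⟩ with hp2
    have hp2v : p2.val = 2*t+2 := rfl
    have hσp2 : (sigmaPerm m p2).val = 2*t+3 := by
      rw [sigmaPerm_val, hp2v, if_pos (by omega)]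
    have hσk_lt : (sigmaPerm m k).val < 2*t+2 := by
      rw [sigmaPerm_val_lt (by omega)]; omega
    -- first op
    set z1 := b * (1 - W r p2) with hz1
    set W1 := W * orthE m k p2 z1 with hW1
    have hg1 : GoodStep W W1 := ⟨_, Submonoid.subset_closure
      ⟨k, p2, z1, fun h => by have := congrArg Fin.val h; omega,
        fun h => by have := congrArg Fin.val h; omega, rfl⟩, rfl⟩
    have hstd1 : Std (2*t) W1 := std_preserved_single hstd k p2 (by omega) (by omega) z1
    have hW1val : W1 r p2 = 1 := by
      rw [hW1, entry_single, if_pos rfl, if_neg (fun h : p2 = sigmaPerm m k => by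
        have := congrArg Fin.val h; omega)]
      rw [hz1]
      have hzz : b * (1 - W r p2) * W r k = (W r k * b) * (1 - W r p2) := by ring
      rw [hzz, hb]
      ring
    -- second op
    set z2 := 1 - W1 r p0 with hz2
    set W2 := W1 * orthE m p2 p0 z2 with hW2
    have hg2 : GoodStep W1 W2 := ⟨_, Submonoid.subset_closure
      ⟨p2, p0, z2, fun h => by have := congrArg Fin.val h; omega,
        fun h => by have := congrArg Fin.val h; omega, rfl⟩, rfl⟩
    refine ⟨W2, hg1.trans hg2,
      std_preserved_single hstd1 p2 p0 (by omega) (by omega) z2, ?_⟩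
    rw [hW2, entry_single, if_pos rfl, if_neg (fun h : p0 = sigmaPerm m p2 => by
      have := congrArg Fin.val h; omega)]
    rw [show W1 r p2 = 1 from hW1val, hz2]
    ring

lemma phase_step [IsLocalRing R] {t : ℕ} (h2 : IsUnit (2:R)) (htn : t < n) (hnm : n + 1 ≤ m)
    (W : Matrix (Fin (2*n)) (Fin (2*m)) R)
    (hWorth : W * phiMat R m * Wᵀ = phiMat R n)
    (hWinv : ∃ B : Matrix (Fin (2*m)) (Fin (2*n)) R, W * B = 1)
    (hstd : Std (2*t) W) :
    ∃ W', GoodStep W W' ∧ Std (2*(t+1)) W' := by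
  obtain ⟨W0, hg0, hstd0, hone0⟩ := phaseA htn hnm W hWorth hWinv hstd
  have hW0orth := hg0.orth hWorth
  set r : Fin (2*n) := ⟨2*t, by omega⟩ with hr
  set r1 : Fin (2*n) := ⟨2*t+1, by omega⟩ with hr1
  set p0 : Fin (2*m) := ⟨2*t, by omega⟩ with hp0
  have hrv : r.val = 2*t := rfl
  have hr1v : r1.val = 2*t+1 := rfl
  have hp0v : p0.val = 2*t := rfl
  have hσp0 : (sigmaPerm m p0).val = 2*t+1 := by
    rw [sigmaPerm_val, hp0v, if_pos (by omega)]
  -- clear row 2t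
  obtain ⟨W1, hg1, hrow1, hpres1⟩ := clear_row (t := t) h2 W0 hW0orth r p0
    (by omega) (by omega) hone0
    (vanish_lemma (by omega) hW0orth hstd0 r (by omega))
  have hstd1 : Std (2*t+1) W1 := by
    intro s j hs
    by_cases hs' : s.val < 2*t
    · rw [hpres1 s j (by rw [hstd0 s p0 hs', if_neg (by omega)])
        (fun l hl => by rw [hstd0 s l hs', if_neg (by omega)])]
      exact hstd0 s j hs'
    · have hseq : s = r := Fin.ext (by omega)
      rw [hseq, hrow1 j]
  have hW1orth := hg1.orth hW0orth
  -- value at (2t+1, 2t+1) is 1, by the pairing with row 2t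
  have hone1 : W1 r1 (sigmaPerm m p0) = 1 := by
    have h0 := congrFun (congrFun hW1orth r1) r
    rw [Matrix.mul_apply] at h0
    have hterm : ∀ l : Fin (2*m), (W1 * phiMat R m) r1 l * W1ᵀ l r
        = if l = p0 then W1 r1 (sigmaPerm m l) else 0 := by
      intro l
      rw [Matrix.transpose_apply, mul_phiMat_apply, hstd1 r l (by omega)]
      by_cases h : l = p0
      · rw [if_pos (show r.val = l.val by rw [hrv, h, hp0v]), mul_one, if_pos h]
      · rw [if_neg (fun hh : r.val = l.val => h (Fin.ext (by omega))),
          mul_zero, if_neg h]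
    rw [Finset.sum_congr rfl (fun l _ => hterm l)] at h0
    rw [Finset.sum_ite_eq' Finset.univ p0 (fun l => W1 r1 (sigmaPerm m l))] at h0
    simp only [Finset.mem_univ, if_true] at h0
    have hσr1 : (sigmaPerm n r1).val = 2*t := by
      rw [sigmaPerm_val, hr1v, if_neg (by omega)]
      omega
    rw [h0, phiMat_apply, if_pos (Fin.ext (by rw [hσr1, hrv]))]
  -- clear row 2t+1
  obtain ⟨W2, hg2, hrow2, hpres2⟩ := clear_row (t := t) h2 W1 hW1orth r1 (sigmaPerm m p0)
    (by omega) (by omega) hone1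
    (vanish_lemma (by omega) hW1orth (fun s j hs => hstd1 s j (by omega)) r1 (by omega))
  refine ⟨W2, (hg0.trans hg1).trans hg2, ?_⟩
  intro s j hs
  by_cases hs' : s.val < 2*t+1
  · rw [hpres2 s j (by rw [hstd1 s _ hs', if_neg (by omega)])
      (fun l hl => by rw [hstd1 s l hs', if_neg (by omega)])]
    exact hstd1 s j hs'
  · have hseq : s = r1 := Fin.ext (by omega)
    rw [hseq, hrow2 j, hσp0, hr1v]

lemma reduce_from [IsLocalRing R] (h2 : IsUnit (2:R)) (hnm : n + 1 ≤ m) :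
    ∀ (d t : ℕ), t + d = n →
    ∀ W : Matrix (Fin (2*n)) (Fin (2*m)) R,
      W * phiMat R m * Wᵀ = phiMat R n →
      (∃ B : Matrix (Fin (2*m)) (Fin (2*n)) R, W * B = 1) →
      Std (2*t) W →
      ∃ W', GoodStep W W' ∧ Std (2*n) W' := by
  intro d
  induction d with
  | zero =>
    intro t ht W _ _ hstd
    have hteq : t = n := by omega
    subst hteq
    exact ⟨W, GoodStep.refl W, hstd⟩
  | succ d ih =>
    intro t ht W hWorth hWinv hstd
    obtain ⟨W', hg, hstd'⟩ := phase_step h2 (by omega) hnm W hWorth hWinv hstd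
    obtain ⟨W'', hg', hstd''⟩ := ih (t+1) (by omega) W' (hg.orth hWorth)
      (hg.rinv hWinv) hstd'
    exact ⟨W'', hg.trans hg', hstd''⟩

theorem reduce_local {R : Type*} [CommRing R] [IsLocalRing R] (h2 : IsUnit (2:R))
    {n m : ℕ} (hnm : n + 1 ≤ m)
    (V : Matrix (Fin (2*n)) (Fin (2*m)) R)
    (hVinv : ∃ B : Matrix (Fin (2*m)) (Fin (2*n)) R, V * B = 1)
    (hVorth : V * phiMat R m * Vᵀ = phiMat R n) :
    ∃ ε, ε ∈ EOGroup R m ∧ V * ε = Jmat R n m := by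
  obtain ⟨W', hg, hstd⟩ := reduce_from h2 hnm n 0 (by omega) V hVorth hVinv
    (fun s j hs => by omega)
  obtain ⟨ε, hε, rfl⟩ := hg
  refine ⟨ε, hε, ?_⟩
  ext s j
  rw [hstd s j (by omega)]
  rfl

end PhaseA
section Assembly
variable {R : Type*} [CommRing R]

lemma Jmat_map {R' : Type*} [CommRing R'] (f : R →+* R') {n m : ℕ} :
    (Jmat R n m).map f = Jmat R' n m := by
  ext i j
  rw [Matrix.map_apply, Jmat, Jmat, Matrix.of_apply, Matrix.of_apply]
  split <;> simp

lemma phiMat_map {R' : Type*} [CommRing R'] (f : R →+* R') {m : ℕ} :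
    (phiMat R m).map f = phiMat R' m := by
  ext i j
  rw [Matrix.map_apply, phiMat, phiMat, Matrix.of_apply, Matrix.of_apply]
  split
  · simp
  · split <;> simp

lemma isOrth_map {R' : Type*} [CommRing R'] (f : R →+* R') {m : ℕ}
    {A : Matrix (Fin (2*m)) (Fin (2*m)) R} (hA : IsOrthogonalMat A) :
    IsOrthogonalMat (A.map f) := by
  rw [IsOrthogonalMat] at *
  rw [← phiMat_map f, ← Matrix.transpose_map, ← Matrix.map_mul, ← Matrix.map_mul, hA]

lemma Jmat_mul_matPerpId {n m : ℕ} (hnm : n ≤ m) (γ : Matrix (Fin (2*n)) (Fin (2*n)) R) :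
    Jmat R n m * matPerpId (2*m) γ = γ * Jmat R n m := by
  ext i j
  rw [Matrix.mul_apply, Matrix.mul_apply]
  simp only [Jmat, Matrix.of_apply]
  have hi2m : i.val < 2*m := by have := i.isLt; omega
  rw [Finset.sum_eq_single (⟨i.val, hi2m⟩ : Fin (2*m))]
  · rw [if_pos rfl, one_mul]
    by_cases hj : j.val < 2*n
    · rw [matPerpId_apply_lt γ
        (show ((⟨i.val, hi2m⟩ : Fin (2*m)) : Fin (2*m)).val < 2*n from i.isLt) hj]
      rw [Finset.sum_eq_single (⟨j.val, hj⟩ : Fin (2*n))]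
      · rw [if_pos rfl, mul_one]
      · intro b _ hb
        rw [if_neg (fun hh => hb (Fin.ext hh)), mul_zero]
      · intro h; exact absurd (Finset.mem_univ _) h
    · rw [matPerpId_apply_lt_ge γ
        (show ((⟨i.val, hi2m⟩ : Fin (2*m)) : Fin (2*m)).val < 2*n from i.isLt) hj]
      symm
      apply Finset.sum_eq_zero
      intro s _
      rw [if_neg (by have := s.isLt; omega), mul_zero]
  · intro b _ hb
    rw [if_neg (fun hh => hb (Fin.ext hh.symm)), zero_mul]
  · intro h; exact absurd (Finset.mem_univ _) h

end Assembly
/-- local version of the generalised homotopy principle, orthogonal case. -/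
theorem stmt13 {R : Type*} [CommRing R] [Nontrivial R] [IsLocalRing R]
    (h2 : IsUnit (2 : R)) {n m : ℕ} (hn : 2 ≤ n) (hnm : n + 2 ≤ m)
    (V : Matrix (Fin (2 * n)) (Fin (2 * m)) R)
    (hVinv : ∃ B : Matrix (Fin (2 * m)) (Fin (2 * n)) R, V * B = 1)
    (hVorth : V * phiMat R m * Vᵀ = phiMat R n)
    (δ : Matrix (Fin (2 * n)) (Fin (2 * n)) R) (hδ : IsOrthogonalMat δ) (hδdet : δ.det = 1)
    (γ : Matrix (Fin (2 * n)) (Fin (2 * n)) (Polynomial R))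
    (hγorth : IsOrthogonalMat γ) (hγdet : γ.det = 1)
    (hγ0 : γ.map (Polynomial.eval 0) = 1) (hγ1 : γ.map (Polynomial.eval 1) = δ) :
    ∃ σ : Matrix (Fin (2 * m)) (Fin (2 * m)) (Polynomial R),
      IsOrthogonalMat σ ∧ σ.det = 1 ∧
      σ.map (Polynomial.eval 0) = 1 ∧
      σ⁻¹ * matPerpId (2 * m) γ ∈ EOGroup (Polynomial R) m ∧
      γ * V.map Polynomial.C = V.map Polynomial.C * σ := by
  classical
  have h2P : IsUnit (2 : Polynomial R) := by
    have := h2.map (Polynomial.C : R →+* Polynomial R); rwa [map_ofNat] at this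
  obtain ⟨ε, hε, hVε⟩ := reduce_local h2 (by omega) V hVinv hVorth
  obtain ⟨ε', hε', hεε', hε'ε⟩ := EO_inv hε
  set εP : Matrix (Fin (2*m)) (Fin (2*m)) (Polynomial R) := ε.map Polynomial.C with hεP
  set εP' : Matrix (Fin (2*m)) (Fin (2*m)) (Polynomial R) := ε'.map Polynomial.C with hεP'
  set β : Matrix (Fin (2*m)) (Fin (2*m)) (Polynomial R) := matPerpId (2*m) γ with hβ
  have hβorth : IsOrthogonalMat β := matPerpId_isOrth (by omega) γ hγorth
  have hεPεP' : εP * εP' = 1 := by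
    rw [hεP, hεP', ← Matrix.map_mul, hεε', Matrix.map_one _ (map_zero _) (map_one _)]
  have hεP'εP : εP' * εP = 1 := by
    rw [hεP, hεP', ← Matrix.map_mul, hε'ε, Matrix.map_one _ (map_zero _) (map_one _)]
  obtain ⟨hβ'β, hββ'⟩ := isOrth_left_inv hβorth
  have hVPεP : (V.map Polynomial.C) * εP = Jmat (Polynomial R) n m := by
    rw [hεP, ← Matrix.map_mul, hVε, Jmat_map]
  refine ⟨εP * β * εP', ?_, ?_, ?_, ?_, ?_⟩
  · exact mul_isOrth (mul_isOrth (EO_isOrth (EO_map _ hε)) hβorth)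
      (EO_isOrth (EO_map _ hε'))
  · have h1 : εP.det * εP'.det = 1 := by
      have h := congrArg Matrix.det hεPεP'
      rwa [Matrix.det_mul, Matrix.det_one] at h
    rw [Matrix.det_mul, Matrix.det_mul]
    calc εP.det * β.det * εP'.det = (εP.det * εP'.det) * β.det := by ring
      _ = β.det := by rw [h1, one_mul]
      _ = 1 := by rw [hβ, matPerpId_det (show 2*n + 2*(m-n) = 2*m by omega), hγdet]
  · rw [show (Polynomial.eval (0:R)) = ⇑(Polynomial.evalRingHom 0) from
      (Polynomial.coe_evalRingHom 0).symm]
    rw [Matrix.map_mul, Matrix.map_mul]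
    have hEmap : ∀ A : Matrix (Fin (2*m)) (Fin (2*m)) R,
        (A.map ⇑(Polynomial.C : R →+* Polynomial R)).map ⇑(Polynomial.evalRingHom (0:R))
          = A := by
      intro A
      rw [Matrix.map_map]
      ext i j
      simp [Matrix.map_apply]
    have hβ0 : β.map ⇑(Polynomial.evalRingHom (0:R)) = 1 := by
      rw [hβ, matPerpId_map (R := Polynomial R) (R' := R) (Polynomial.evalRingHom (0:R))]
      have hγmap : γ.map ⇑(Polynomial.evalRingHom (0:R)) = 1 := by
        rw [Polynomial.coe_evalRingHom]
        exact hγ0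
      rw [hγmap]
      exact matPerpId_one (by omega)
    rw [hεP, hεP', hEmap ε, hEmap ε', hβ0, Matrix.mul_one, hεε']
  · have hτ : (εP * β * εP')⁻¹
        = εP * (phiMat (Polynomial R) m * βᵀ * phiMat (Polynomial R) m) * εP' := by
      apply Matrix.inv_eq_right_inv
      calc εP * β * εP' * (εP * (phiMat (Polynomial R) m * βᵀ * phiMat (Polynomial R) m) * εP')
          = εP * (β * (εP' * εP)
            * (phiMat (Polynomial R) m * βᵀ * phiMat (Polynomial R) m)) * εP' := by
            noncomm_ring
        _ = εP * (β * (phiMat (Polynomial R) m * βᵀ * phiMat (Polynomial R) m)) * εP' := by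
            rw [hεP'εP, Matrix.mul_one]
        _ = εP * εP' := by rw [hββ', Matrix.mul_one]
        _ = 1 := hεPεP'
    rw [hτ]
    have hconj := conj_EO_mem hnm γ hγorth h2P (EO_map (Polynomial.C : R →+* Polynomial R) hε')
    have hassoc : εP * (phiMat (Polynomial R) m * βᵀ * phiMat (Polynomial R) m) * εP'
        * matPerpId (2*m) γ
        = εP * ((phiMat (Polynomial R) m * (matPerpId (2*m) γ)ᵀ * phiMat (Polynomial R) m)
          * εP' * matPerpId (2*m) γ) := by
      rw [← hβ]
      noncomm_ring
    rw [hassoc]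
    exact Submonoid.mul_mem _ (EO_map _ hε) hconj
  · symm
    calc V.map Polynomial.C * (εP * β * εP')
        = ((V.map Polynomial.C * εP) * β) * εP' := by simp only [Matrix.mul_assoc]
      _ = (Jmat (Polynomial R) n m * β) * εP' := by rw [hVPεP]
      _ = (γ * Jmat (Polynomial R) n m) * εP' := by
          rw [hβ, Jmat_mul_matPerpId (by omega)]
      _ = γ * ((V.map Polynomial.C * εP) * εP') := by
          rw [hVPεP]; simp only [Matrix.mul_assoc]
      _ = γ * (V.map Polynomial.C * (εP * εP')) := by simp only [Matrix.mul_assoc]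
      _ = γ * V.map Polynomial.C := by rw [hεPεP', Matrix.mul_one]
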